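/- arXiv:1710.04526 — 3 statements merged into one kernel-verified Lean document; each statement's English description precedes it below -/
import Mathlib

section
/- For every real p > 2, every a > 0 and every b with 0 ≤ b ≤ p − 1, the function f : ℝ² → ℝ defined by f(s,t) = (a/p)(|s|^p + 2b|s|^{p/2}|t|^{p/2} + |t|^p) is strictly convex on ℝ². -/
open Real Set Filter

/-- signed power: `spow c u = u * |u|^(c-1)`, i.e. `sign u * |u|^c`. -/
noncomputable def spow (c u : ℝ) : ℝ := u * |u| ^ (c - 1)

lemma spow_pos_eq {c u : ℝ} (hu : 0 < u) : spow c u = u ^ c := by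
  rw [spow, abs_of_pos hu, Real.rpow_sub hu, Real.rpow_one]; field_simp

lemma spow_neg (c u : ℝ) : spow c (-u) = - spow c u := by simp [spow]

lemma abs_spow_eq (c : ℝ) (u : ℝ) (hc : 0 < c) : |spow c u| = |u| ^ c := by
  rcases eq_or_ne u 0 with h | h
  · simp [spow, h, Real.zero_rpow hc.ne']
  · rw [spow, abs_mul, abs_of_nonneg (Real.rpow_nonneg (abs_nonneg u) _)]
    nth_rewrite 1 [← Real.rpow_one |u|]
    rw [← Real.rpow_add (abs_pos.mpr h)]
    norm_num

lemma spow_sq {c : ℝ} (hc : 0 < c) (u : ℝ) : spow c u * spow c u = |u| ^ c * |u| ^ c := by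
  rw [← abs_mul_abs_self (spow c u), abs_spow_eq c u hc]

/-- derivative of `|x|^c` everywhere, `c > 1`. -/
lemma hasDerivAt_abs_rpow' {c : ℝ} (hc : 1 < c) (u : ℝ) :
    HasDerivAt (fun x : ℝ => |x| ^ c) (c * spow (c - 1) u) u := by
  have := hasDerivAt_abs_rpow u hc
  convert this using 1
  simp only [spow]
  rw [show c - 1 - 1 = c - 2 by ring]
  ring

/-- derivative of `|x|^c` at a nonzero point, any real `c`. -/
lemma hasDerivAt_abs_rpow_ne (c : ℝ) {u : ℝ} (hu : u ≠ 0) :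
    HasDerivAt (fun x : ℝ => |x| ^ c) (c * spow (c - 1) u) u := by
  rcases hu.lt_or_gt with h | h
  · have key : HasDerivAt (fun x : ℝ => (-x) ^ c) (c * (-u) ^ (c - 1) * (-1)) u :=
      (Real.hasDerivAt_rpow_const (p := c) (Or.inl (by linarith : -u ≠ 0))).comp u
        (hasDerivAt_neg u)
    have heq : (fun x : ℝ => (-x) ^ c) =ᶠ[nhds u] fun x => |x| ^ c := by
      filter_upwards [Iio_mem_nhds h] with x hx
      rw [abs_of_neg hx]
    have h2 := key.congr_of_eventuallyEq heq.symm
    refine h2.congr_deriv ?_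
    have h3 : spow (c-1) u = -(-u) ^ (c-1) := by
      rw [show u = -(-u) by ring, spow_neg, spow_pos_eq (by linarith : (0:ℝ) < -u)]
      ring_nf
    rw [h3]; ring
  · have key : HasDerivAt (fun x : ℝ => x ^ c) (c * u ^ (c - 1)) u :=
      Real.hasDerivAt_rpow_const (Or.inl h.ne')
    have heq : (fun x : ℝ => x ^ c) =ᶠ[nhds u] fun x => |x| ^ c := by
      filter_upwards [Ioi_mem_nhds h] with x hx
      rw [abs_of_pos hx]
    have h2 := key.congr_of_eventuallyEq heq.symm
    refine h2.congr_deriv ?_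
    rw [spow_pos_eq h]

/-- derivative of `spow c` at a nonzero point, any real `c`. -/
lemma hasDerivAt_spow_ne (c : ℝ) {u : ℝ} (hu : u ≠ 0) :
    HasDerivAt (spow c) (c * |u| ^ (c - 1)) u := by
  have habs : (0:ℝ) < |u| := abs_pos.mpr hu
  have h1 : HasDerivAt (fun x : ℝ => |x| ^ (c - 1)) ((c-1) * spow (c - 2) u) u := by
    have := hasDerivAt_abs_rpow_ne (c-1) hu
    convert this using 2; ring
  have h2 : HasDerivAt (spow c) (1 * |u| ^ (c-1) + u * ((c-1) * spow (c - 2) u)) u :=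
    (hasDerivAt_id u).mul h1
  convert h2 using 1
  have h3 : u * spow (c-2) u = |u| ^ (c-1) := by
    simp only [spow]
    rw [← mul_assoc, ← abs_mul_abs_self u,
      show c - 2 - 1 = c - 1 - 1 - 1 by ring,
      Real.rpow_sub habs, Real.rpow_sub habs, Real.rpow_one]
    field_simp
  have h4 : u * ((c-1) * spow (c-2) u) = (c-1) * (u * spow (c-2) u) := by ring
  rw [h4, h3]; ring

/-- composition with an affine map. -/
lemma HasDerivAt.comp_affine {f : ℝ → ℝ} {f' a₀ a₁ t : ℝ}
    (h : HasDerivAt f f' (a₀ + a₁ * t)) :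
    HasDerivAt (fun s => f (a₀ + a₁ * s)) (f' * a₁) t := by
  have hA : HasDerivAt (fun s : ℝ => a₀ + a₁ * s) a₁ t := by
    exact (((hasDerivAt_id' t).const_mul a₁).const_add a₀).congr_deriv (mul_one a₁)
  exact h.comp t hA

lemma continuous_spow {c : ℝ} (hc : 0 < c) : Continuous (spow c) := by
  rw [continuous_iff_continuousAt]
  intro u
  rcases eq_or_ne u 0 with rfl | hu
  · have h0 : spow c 0 = 0 := by simp [spow]
    unfold ContinuousAt
    rw [h0, tendsto_zero_iff_norm_tendsto_zero]
    have heq : (fun x : ℝ => ‖spow c x‖) = fun x : ℝ => |x| ^ c := by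
      funext x; rw [Real.norm_eq_abs, abs_spow_eq c x hc]
    rw [heq]
    have hcont : ContinuousAt (fun x : ℝ => |x| ^ c) 0 :=
      continuous_abs.continuousAt.rpow_const (Or.inr hc.le)
    have h2 : Tendsto (fun x : ℝ => |x| ^ c) (nhds 0) (nhds (|(0:ℝ)| ^ c)) := hcont
    simpa [Real.zero_rpow hc.ne'] using h2
  · apply ContinuousAt.mul continuousAt_id
    exact continuous_abs.continuousAt.rpow_const (Or.inl (abs_ne_zero.mpr hu))

lemma continuous_abs_rpow {c : ℝ} (hc : 0 ≤ c) : Continuous (fun x : ℝ => |x| ^ c) :=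
  continuous_abs.rpow_const (fun _ => Or.inr hc)

/-- If `f` is continuous and has positive derivative outside a finite set on `(s,t)`,
then `f s < f t`. -/
lemma lt_of_deriv_pos_off_finite {f : ℝ → ℝ} (hf : Continuous f) :
    ∀ (E : Finset ℝ) (s t : ℝ), s < t →
      (∀ x ∈ Set.Ioo s t, x ∉ E → 0 < deriv f x) → f s < f t := by
  intro E
  induction E using Finset.strongInduction with
  | _ E ih =>
    intro s t hst hpos
    by_cases hE : ∃ e ∈ E, e ∈ Set.Ioo s t
    · obtain ⟨e, heE, hes⟩ := hE
      have hsub : E.erase e ⊂ E := Finset.erase_ssubset heE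
      have h1 : f s < f e := by
        apply ih _ hsub s e hes.1
        intro x hx hxE
        apply hpos x ⟨hx.1, hx.2.trans hes.2⟩
        intro hxE'
        exact hxE (Finset.mem_erase.mpr ⟨ne_of_lt hx.2, hxE'⟩)
      have h2 : f e < f t := by
        apply ih _ hsub e t hes.2
        intro x hx hxE
        apply hpos x ⟨hes.1.trans hx.1, hx.2⟩
        intro hxE'
        exact hxE (Finset.mem_erase.mpr ⟨ne_of_gt hx.1, hxE'⟩)
      exact h1.trans h2
    · push_neg at hE
      have := strictMonoOn_of_deriv_pos (convex_Icc s t) hf.continuousOn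
        (fun x hx => by
          rw [interior_Icc] at hx
          exact hpos x hx (fun hxE => hE x hxE hx))
      exact this (left_mem_Icc.mpr hst.le) (right_mem_Icc.mpr hst.le) hst

/-- zeros of a nontrivial affine function form a finite set. -/
lemma affine_zero_finite {c₀ c₁ : ℝ} (h : ¬ (c₀ = 0 ∧ c₁ = 0)) :
    {t : ℝ | c₀ + c₁ * t = 0}.Finite := by
  by_cases hc1 : c₁ = 0
  · have hc0 : c₀ ≠ 0 := fun h0 => h ⟨h0, hc1⟩
    convert Set.finite_empty
    ext t
    simp [hc1, hc0]
  · apply Set.Finite.subset (Set.finite_singleton (-c₀ / c₁))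
    intro t ht
    simp only [Set.mem_setOf_eq] at ht
    simp only [Set.mem_singleton_iff]
    field_simp
    linarith

/-- `|x|^p` is strictly convex on ℝ for real `p > 1`. -/
lemma strictConvexOn_abs_rpow {p : ℝ} (hp : 1 < p) :
    StrictConvexOn ℝ (Set.univ : Set ℝ) (fun x : ℝ => |x| ^ p) := by
  have hp0 : (0:ℝ) < p := by linarith
  refine ⟨convex_univ, fun x _ y _ hxy w₁ w₂ hw₁ hw₂ hw => ?_⟩
  simp only [smul_eq_mul]
  have habs : |w₁ * x + w₂ * y| ≤ w₁ * |x| + w₂ * |y| := by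
    calc |w₁ * x + w₂ * y| ≤ |w₁ * x| + |w₂ * y| := abs_add_le _ _
      _ = w₁ * |x| + w₂ * |y| := by
          rw [abs_mul, abs_mul, abs_of_pos hw₁, abs_of_pos hw₂]
  rcases eq_or_ne |x| |y| with heq | hne
  · have hxny : x = -y := by
      rcases abs_eq_abs.mp heq with h | h
      · exact absurd h hxy
      · exact h
    have hy0 : y ≠ 0 := by
      rintro rfl
      rw [neg_zero] at hxny
      exact hxy (by rw [hxny])
    have h1 : |w₁ * x + w₂ * y| = |w₂ - w₁| * |y| := by
      rw [hxny, show w₁ * -y + w₂ * y = (w₂ - w₁) * y by ring, abs_mul]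
    have h2 : |w₂ - w₁| < 1 := by
      rw [abs_lt]; constructor <;> linarith
    have h3 : |w₁ * x + w₂ * y| < |y| := by
      rw [h1]
      have : (0:ℝ) < |y| := abs_pos.mpr hy0
      nlinarith
    calc |w₁ * x + w₂ * y| ^ p < |y| ^ p :=
          Real.rpow_lt_rpow (abs_nonneg _) h3 hp0
      _ = w₁ * |x| ^ p + w₂ * |y| ^ p := by
          rw [heq]; linear_combination (|y| ^ p) * hw.symm
  · have step1 : |w₁ * x + w₂ * y| ^ p ≤ (w₁ * |x| + w₂ * |y|) ^ p :=
      Real.rpow_le_rpow (abs_nonneg _) habs hp0.le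
    have step2 : (w₁ * |x| + w₂ * |y|) ^ p < w₁ * |x| ^ p + w₂ * |y| ^ p := by
      have := (strictConvexOn_rpow hp).2 (Set.mem_Ici.mpr (abs_nonneg x))
        (Set.mem_Ici.mpr (abs_nonneg y)) hne hw₁ hw₂ hw
      simpa using this
    exact step1.trans_lt step2

/-- strict convexity of `t ↦ K * |c₀ + c₁ t|^p` for `K > 0`, `c₁ ≠ 0`. -/
lemma strictConvexOn_abs_rpow_affine {p K c₀ c₁ : ℝ} (hp : 1 < p) (hK : 0 < K) (hc : c₁ ≠ 0) :
    StrictConvexOn ℝ (Set.univ : Set ℝ) (fun t : ℝ => K * |c₀ + c₁ * t| ^ p) := by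
  refine ⟨convex_univ, fun s _ t _ hst w₁ w₂ hw₁ hw₂ hw => ?_⟩
  simp only [smul_eq_mul]
  have key : c₀ + c₁ * (w₁ * s + w₂ * t) = w₁ * (c₀ + c₁ * s) + w₂ * (c₀ + c₁ * t) := by
    have : w₁ = 1 - w₂ := by linarith
    rw [this]; ring
  have hne : c₀ + c₁ * s ≠ c₀ + c₁ * t := by
    intro h
    exact hst (mul_left_cancel₀ hc (by linarith : c₁ * s = c₁ * t))
  have := (strictConvexOn_abs_rpow hp).2 (Set.mem_univ (c₀ + c₁ * s))
    (Set.mem_univ (c₀ + c₁ * t)) hne hw₁ hw₂ hw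
  simp only [smul_eq_mul] at this
  rw [key]
  nlinarith

lemma quad_pos (α β γ a₁ b₁ : ℝ) (hα : 0 < α) (hkey : γ^2 < 4*α*β)
    (hδ : a₁ ≠ 0 ∨ b₁ ≠ 0) : 0 < α*a₁^2 + β*b₁^2 + γ*(a₁*b₁) := by
  rcases eq_or_ne b₁ 0 with hb₁ | hb₁
  · have ha₁ : a₁ ≠ 0 := by rcases hδ with h | h; exact h; exact absurd hb₁ h
    have hsq : 0 < a₁^2 := by positivity
    subst hb₁
    nlinarith [mul_pos hα hsq]
  · have hsq : 0 < b₁^2 := by positivity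
    have h5 : 0 < (4*α*β - γ^2) * b₁^2 := mul_pos (by linarith) hsq
    nlinarith [sq_nonneg (2*α*a₁ + γ*b₁), h5, hα]

set_option maxHeartbeats 1000000 in
lemma Qpos (p b : ℝ) (hp : 2 < p) (hb0 : 0 ≤ b) (hb1 : b ≤ p - 1)
    (u v : ℝ) (hu : 0 < u) (hv : 0 < v) (huv : u ≠ v)
    (sA sB : ℝ) (hsA : sA * sA = u ^ (p/2-1) * u ^ (p/2-1))
    (hsB : sB * sB = v ^ (p/2-1) * v ^ (p/2-1))
    (a₁ b₁ : ℝ) (hδ : a₁ ≠ 0 ∨ b₁ ≠ 0) :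
    0 < (p*(p-1)*u^(p-2) + b*(p*(p-2)/2)*u^(p/2-2)*v^(p/2)) * a₁^2
      + (p*(p-1)*v^(p-2) + b*(p*(p-2)/2)*v^(p/2-2)*u^(p/2)) * b₁^2
      + b*p^2*sA*sB*(a₁*b₁) := by
  have hp0 : (0:ℝ) < p := by linarith
  set P := p*(p-1) with hP
  set C := b*(p*(p-2)/2) with hC
  have hPpos : 0 < P := by nlinarith
  have hCnn : 0 ≤ C := by
    apply mul_nonneg hb0; nlinarith
  have hu2 : u^(p-2) = u^(p/2-2) * u^(p/2) := by
    rw [← Real.rpow_add hu]; ring_nf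
  have hv2 : v^(p-2) = v^(p/2-2) * v^(p/2) := by
    rw [← Real.rpow_add hv]; ring_nf
  have hu1 : u^(p/2-1) * u^(p/2-1) = u^(p-2) := by
    rw [← Real.rpow_add hu]; ring_nf
  have hv1 : v^(p/2-1) * v^(p/2-1) = v^(p-2) := by
    rw [← Real.rpow_add hv]; ring_nf
  set uh := u^(p/2) with huh
  set vh := v^(p/2) with hvh
  set uh2 := u^(p/2-2) with huh2
  set vh2 := v^(p/2-2) with hvh2
  have huhp : 0 < uh := Real.rpow_pos_of_pos hu _
  have hvhp : 0 < vh := Real.rpow_pos_of_pos hv _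
  have huh2p : 0 < uh2 := Real.rpow_pos_of_pos hu _
  have hvh2p : 0 < vh2 := Real.rpow_pos_of_pos hv _
  have huhvh : uh ≠ vh := by
    rcases lt_or_gt_of_ne huv with h | h
    · exact ne_of_lt (Real.rpow_lt_rpow hu.le h (by linarith))
    · exact (ne_of_lt (Real.rpow_lt_rpow hv.le h (by linarith))).symm
  have hγsq : (b*p^2*sA*sB)^2 = (b*p^2)^2 * ((uh2*uh)*(vh2*vh)) := by
    have h1 : (b*p^2*sA*sB)^2 = (b*p^2)^2 * ((sA*sA)*(sB*sB)) := by ring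
    rw [h1, hsA, hsB, hu1, hv1, hu2, hv2]
  have key : (b*p^2*sA*sB)^2
      < 4*(P*(uh2*uh) + C*uh2*vh)*(P*(vh2*vh) + C*vh2*uh) := by
    rw [hγsq]
    have hZ : (0:ℝ) < (uh2*uh)*(vh2*vh) := by positivity
    rcases eq_or_lt_of_le hb0 with hb | hb
    · have hC0 : C = 0 := by rw [hC, ← hb]; ring
      rw [hC0, ← hb]
      have hpos := mul_pos (mul_pos hPpos (mul_pos huh2p huhp))
        (mul_pos hPpos (mul_pos hvh2p hvhp))
      nlinarith [hpos]
    · have hCpos : 0 < C := by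
        apply mul_pos hb; nlinarith
      have hAM : 2*(uh*vh) < uh*uh + vh*vh := by
        nlinarith [sq_pos_of_ne_zero (sub_ne_zero.mpr huhvh)]
      have h6 : 0 ≤ p - 1 - b := by linarith
      have hcoef : b*p^2 ≤ 2*(P+C) := by
        rw [hP, hC]; nlinarith [mul_nonneg hp0.le h6]
      have hbp2 : 0 ≤ b*p^2 := by positivity
      have step1 : (b*p^2)^2 * ((uh2*uh)*(vh2*vh)) ≤ 4*(P+C)^2*((uh2*uh)*(vh2*vh)) := by
        have h4 : (b*p^2)^2 ≤ (2*(P+C))^2 := pow_le_pow_left₀ hbp2 hcoef 2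
        calc (b*p^2)^2 * ((uh2*uh)*(vh2*vh)) ≤ (2*(P+C))^2 * ((uh2*uh)*(vh2*vh)) :=
              mul_le_mul_of_nonneg_right h4 hZ.le
          _ = 4*(P+C)^2*((uh2*uh)*(vh2*vh)) := by ring
      have step2 : 4*(P*(uh2*uh) + C*uh2*vh)*(P*(vh2*vh) + C*vh2*uh)
          - 4*(P+C)^2*((uh2*uh)*(vh2*vh)) = 4*P*C*(uh2*vh2)*((uh*uh+vh*vh) - 2*(uh*vh)) := by
        ring
      have step3 : 0 < 4*P*C*(uh2*vh2)*((uh*uh+vh*vh) - 2*(uh*vh)) := by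
        apply mul_pos
        · positivity
        · linarith
      linarith
  rw [hu2, hv2]
  refine quad_pos _ _ _ a₁ b₁ ?_ key hδ
  exact add_pos_of_pos_of_nonneg (mul_pos hPpos (mul_pos huh2p huhp))
    (mul_nonneg (mul_nonneg hCnn huh2p.le) hvhp.le)
set_option maxHeartbeats 2000000 in
lemma key1d (p b : ℝ) (hp : 2 < p) (hb0 : 0 ≤ b) (hb1 : b ≤ p - 1)
    (a₀ a₁ b₀ b₁ : ℝ) (hd : a₁ ≠ 0 ∨ b₁ ≠ 0) :
    StrictConvexOn ℝ (Set.univ : Set ℝ)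
      (fun t : ℝ => |a₀ + a₁*t|^p + 2*b*|a₀ + a₁*t|^(p/2)*|b₀ + b₁*t|^(p/2)
        + |b₀ + b₁*t|^p) := by
  have hp1 : (1:ℝ) < p := by linarith
  have hph : (1:ℝ) < p/2 := by linarith
  have hp0 : (0:ℝ) < p := by linarith
  have hph0 : (0:ℝ) < p/2 := by linarith
  have hK : (0:ℝ) < 2 + 2*b := by linarith
  by_cases hA0 : a₀ = 0 ∧ a₁ = 0
  · -- A ≡ 0
    obtain ⟨h1, h2⟩ := hA0
    have hb₁ : b₁ ≠ 0 := by
      rcases hd with h | h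
      · exact absurd h2 h
      · exact h
    have heq : (fun t : ℝ => |a₀ + a₁*t|^p + 2*b*|a₀ + a₁*t|^(p/2)*|b₀ + b₁*t|^(p/2)
        + |b₀ + b₁*t|^p) = fun t : ℝ => (1:ℝ) * |b₀ + b₁*t|^p := by
      funext t
      have hz : a₀ + a₁ * t = 0 := by rw [h1, h2]; ring
      rw [hz, abs_zero, Real.zero_rpow hp0.ne', Real.zero_rpow hph0.ne']
      ring
    rw [heq]
    exact strictConvexOn_abs_rpow_affine hp1 one_pos hb₁
  by_cases hB0 : b₀ = 0 ∧ b₁ = 0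
  · obtain ⟨h1, h2⟩ := hB0
    have ha₁ : a₁ ≠ 0 := by
      rcases hd with h | h
      · exact h
      · exact absurd h2 h
    have heq : (fun t : ℝ => |a₀ + a₁*t|^p + 2*b*|a₀ + a₁*t|^(p/2)*|b₀ + b₁*t|^(p/2)
        + |b₀ + b₁*t|^p) = fun t : ℝ => (1:ℝ) * |a₀ + a₁*t|^p := by
      funext t
      have hz : b₀ + b₁ * t = 0 := by rw [h1, h2]; ring
      rw [hz, abs_zero, Real.zero_rpow hp0.ne', Real.zero_rpow hph0.ne']
      ring
    rw [heq]
    exact strictConvexOn_abs_rpow_affine hp1 one_pos ha₁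
  by_cases hAB : a₀ = b₀ ∧ a₁ = b₁
  · obtain ⟨h1, h2⟩ := hAB
    have ha₁ : a₁ ≠ 0 := by
      rcases hd with h | h
      · exact h
      · rw [h2]; exact h
    have heq : (fun t : ℝ => |a₀ + a₁*t|^p + 2*b*|a₀ + a₁*t|^(p/2)*|b₀ + b₁*t|^(p/2)
        + |b₀ + b₁*t|^p) = fun t : ℝ => (2 + 2*b) * |a₀ + a₁*t|^p := by
      funext t
      have hz : b₀ + b₁ * t = a₀ + a₁ * t := by rw [h1, h2]
      rw [hz]
      have hhalf : |a₀ + a₁*t|^(p/2) * |a₀ + a₁*t|^(p/2) = |a₀ + a₁*t|^p := by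
        rw [← Real.rpow_add' (abs_nonneg _) (by linarith : p/2 + p/2 ≠ 0)]
        norm_num
      nlinarith [hhalf]
    rw [heq]
    exact strictConvexOn_abs_rpow_affine hp1 hK ha₁
  by_cases hAB' : a₀ = -b₀ ∧ a₁ = -b₁
  · obtain ⟨h1, h2⟩ := hAB'
    have hb₁ : b₁ ≠ 0 := by
      rcases hd with h | h
      · intro hb; rw [h2, hb] at h; simp at h
      · exact h
    have heq : (fun t : ℝ => |a₀ + a₁*t|^p + 2*b*|a₀ + a₁*t|^(p/2)*|b₀ + b₁*t|^(p/2)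
        + |b₀ + b₁*t|^p) = fun t : ℝ => (2 + 2*b) * |b₀ + b₁*t|^p := by
      funext t
      have hz : |a₀ + a₁*t| = |b₀ + b₁*t| := by
        rw [h1, h2, show -b₀ + -b₁ * t = -(b₀ + b₁*t) by ring, abs_neg]
      rw [hz]
      have hhalf : |b₀ + b₁*t|^(p/2) * |b₀ + b₁*t|^(p/2) = |b₀ + b₁*t|^p := by
        rw [← Real.rpow_add' (abs_nonneg _) (by linarith : p/2 + p/2 ≠ 0)]
        norm_num
      nlinarith [hhalf]
    rw [heq]
    exact strictConvexOn_abs_rpow_affine hp1 hK hb₁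
  -- MAIN CASE
  set g : ℝ → ℝ := fun t : ℝ => |a₀ + a₁*t|^p + 2*b*|a₀ + a₁*t|^(p/2)*|b₀ + b₁*t|^(p/2)
        + |b₀ + b₁*t|^p with hgdef
  set G : ℝ → ℝ := fun t : ℝ =>
      p * spow (p-1) (a₀ + a₁*t) * a₁
      + (2*b*((p/2) * spow (p/2-1) (a₀ + a₁*t) * a₁) * |b₀ + b₁*t|^(p/2)
         + 2*b*|a₀ + a₁*t|^(p/2) * ((p/2) * spow (p/2-1) (b₀ + b₁*t) * b₁))
      + p * spow (p-1) (b₀ + b₁*t) * b₁ with hGdef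
  -- derivative of g is G
  have hg : ∀ t : ℝ, HasDerivAt g (G t) t := by
    intro t
    have h1 : HasDerivAt (fun s : ℝ => |a₀ + a₁*s|^p)
        (p * spow (p-1) (a₀ + a₁*t) * a₁) t :=
      (hasDerivAt_abs_rpow' hp1 (a₀ + a₁*t)).comp_affine
    have h3 : HasDerivAt (fun s : ℝ => |b₀ + b₁*s|^p)
        (p * spow (p-1) (b₀ + b₁*t) * b₁) t :=
      (hasDerivAt_abs_rpow' hp1 (b₀ + b₁*t)).comp_affine
    have h2a : HasDerivAt (fun s : ℝ => 2*b*|a₀ + a₁*s|^(p/2))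
        (2*b*((p/2) * spow (p/2-1) (a₀ + a₁*t) * a₁)) t :=
      ((hasDerivAt_abs_rpow' hph (a₀ + a₁*t)).comp_affine).const_mul (2*b)
    have h2b : HasDerivAt (fun s : ℝ => |b₀ + b₁*s|^(p/2))
        ((p/2) * spow (p/2-1) (b₀ + b₁*t) * b₁) t :=
      (hasDerivAt_abs_rpow' hph (b₀ + b₁*t)).comp_affine
    have h2 := h2a.mul h2b
    exact (h1.add h2).add h3
  -- continuity of G
  have hcA : Continuous (fun t : ℝ => a₀ + a₁ * t) := by continuity
  have hcB : Continuous (fun t : ℝ => b₀ + b₁ * t) := by continuity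
  have hGcont : Continuous G := by
    rw [hGdef]
    apply Continuous.add
    apply Continuous.add
    · exact (continuous_const.mul ((continuous_spow (by linarith : (0:ℝ) < p - 1)).comp hcA)).mul
        continuous_const
    · apply Continuous.add
      · exact (continuous_const.mul ((continuous_const.mul ((continuous_spow
          (by linarith : (0:ℝ) < p/2 - 1)).comp hcA)).mul continuous_const)).mul
          ((continuous_abs_rpow hph0.le).comp hcB)
      · exact (continuous_const.mul ((continuous_abs_rpow hph0.le).comp hcA)).mul
          ((continuous_const.mul ((continuous_spow
          (by linarith : (0:ℝ) < p/2 - 1)).comp hcB)).mul continuous_const)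
    · exact (continuous_const.mul ((continuous_spow (by linarith : (0:ℝ) < p - 1)).comp hcB)).mul
        continuous_const
  -- the finite exceptional set
  have hfinA : {t : ℝ | a₀ + a₁ * t = 0}.Finite := affine_zero_finite hA0
  have hfinB : {t : ℝ | b₀ + b₁ * t = 0}.Finite := affine_zero_finite hB0
  have hfinAB : {t : ℝ | (a₀ - b₀) + (a₁ - b₁) * t = 0}.Finite := by
    apply affine_zero_finite
    rintro ⟨e1, e2⟩
    exact hAB ⟨by linarith, by linarith⟩
  have hfinAB' : {t : ℝ | (a₀ + b₀) + (a₁ + b₁) * t = 0}.Finite := by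
    apply affine_zero_finite
    rintro ⟨e1, e2⟩
    exact hAB' ⟨by linarith, by linarith⟩
  have hfinE : ({t : ℝ | a₀ + a₁ * t = 0} ∪ {t : ℝ | b₀ + b₁ * t = 0}
      ∪ {t : ℝ | (a₀ - b₀) + (a₁ - b₁) * t = 0}
      ∪ {t : ℝ | (a₀ + b₀) + (a₁ + b₁) * t = 0}).Finite :=
    ((hfinA.union hfinB).union hfinAB).union hfinAB'
  -- positivity of deriv G off E
  have hGpos : ∀ x : ℝ, x ∉ hfinE.toFinset → 0 < deriv G x := by
    intro x hx
    rw [Set.Finite.mem_toFinset] at hx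
    simp only [Set.mem_union, Set.mem_setOf_eq, not_or] at hx
    obtain ⟨⟨⟨hx1, hx2⟩, hx3⟩, hx4⟩ := hx
    -- derivative of G at x
    have hA1 : HasDerivAt (fun s : ℝ => p * spow (p-1) (a₀ + a₁*s) * a₁)
        (p * ((p-1) * |a₀ + a₁*x|^(p-1-1) * a₁) * a₁) x :=
      (((hasDerivAt_spow_ne (p-1) hx1).comp_affine).const_mul p).mul_const a₁
    have hB1 : HasDerivAt (fun s : ℝ => p * spow (p-1) (b₀ + b₁*s) * b₁)
        (p * ((p-1) * |b₀ + b₁*x|^(p-1-1) * b₁) * b₁) x :=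
      (((hasDerivAt_spow_ne (p-1) hx2).comp_affine).const_mul p).mul_const b₁
    have hM1a : HasDerivAt (fun s : ℝ => 2*b*((p/2) * spow (p/2-1) (a₀ + a₁*s) * a₁))
        (2*b*((p/2) * ((p/2-1) * |a₀ + a₁*x|^(p/2-1-1) * a₁) * a₁)) x := by
      exact ((((hasDerivAt_spow_ne (p/2-1) hx1).comp_affine).const_mul
        (p/2)).mul_const a₁).const_mul (2*b)
    have hM1b : HasDerivAt (fun s : ℝ => |b₀ + b₁*s|^(p/2))
        ((p/2) * spow (p/2-1) (b₀ + b₁*x) * b₁) x :=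
      (hasDerivAt_abs_rpow' hph (b₀ + b₁*x)).comp_affine
    have hM1 := hM1a.mul hM1b
    have hM2a : HasDerivAt (fun s : ℝ => 2*b*|a₀ + a₁*s|^(p/2))
        (2*b*((p/2) * spow (p/2-1) (a₀ + a₁*x) * a₁)) x :=
      ((hasDerivAt_abs_rpow' hph (a₀ + a₁*x)).comp_affine).const_mul (2*b)
    have hM2b : HasDerivAt (fun s : ℝ => (p/2) * spow (p/2-1) (b₀ + b₁*s) * b₁)
        ((p/2) * ((p/2-1) * |b₀ + b₁*x|^(p/2-1-1) * b₁) * b₁) x :=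
      (((hasDerivAt_spow_ne (p/2-1) hx2).comp_affine).const_mul (p/2)).mul_const b₁
    have hM2 := hM2a.mul hM2b
    have hGD := (hA1.add (hM1.add hM2)).add hB1
    have hGx : deriv G x = _ := hGD.deriv
    rw [hGx]
    -- now prove positivity, rewriting to the Qpos shape
    have hsA := spow_sq (by linarith : (0:ℝ) < p/2 - 1) (a₀ + a₁*x)
    have hsB := spow_sq (by linarith : (0:ℝ) < p/2 - 1) (b₀ + b₁*x)
    have habsne : |a₀ + a₁*x| ≠ |b₀ + b₁*x| := by
      intro h
      rcases abs_eq_abs.mp h with h' | h'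
      · exact hx3 (by linarith)
      · exact hx4 (by linarith)
    have hQ := Qpos p b hp hb0 hb1 |a₀ + a₁*x| |b₀ + b₁*x|
      (abs_pos.mpr hx1) (abs_pos.mpr hx2) habsne
      (spow (p/2-1) (a₀ + a₁*x)) (spow (p/2-1) (b₀ + b₁*x)) hsA hsB a₁ b₁ hd
    have hexp1 : p - 1 - 1 = p - 2 := by ring
    have hexp2 : p/2 - 1 - 1 = p/2 - 2 := by ring
    rw [hexp1, hexp2]
    nlinarith [hQ]
  -- strict monotonicity of deriv g
  have hderiv : deriv g = G := funext fun t => (hg t).deriv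
  have hmono : StrictMono (deriv g) := by
    rw [hderiv]
    intro s t hst
    apply lt_of_deriv_pos_off_finite hGcont hfinE.toFinset s t hst
    intro x _ hxE
    exact hGpos x hxE
  exact StrictMono.strictConvexOn_univ_of_deriv (by
    rw [hgdef]
    apply Continuous.add
    apply Continuous.add
    · exact (continuous_abs_rpow hp0.le).comp hcA
    · exact ((continuous_const.mul ((continuous_abs_rpow hph0.le).comp hcA))).mul
        ((continuous_abs_rpow hph0.le).comp hcB)
    · exact (continuous_abs_rpow hp0.le).comp hcB) hmono

/-- For every real `p > 2`, `a > 0` and `0 ≤ b ≤ p - 1`, the function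
`f(s,t) = (a/p)(|s|^p + 2b|s|^(p/2)|t|^(p/2) + |t|^p)` is strictly convex on `ℝ²`. -/
theorem stmt_0 (p a b : ℝ) (hp : 2 < p) (ha : 0 < a) (hb0 : 0 ≤ b) (hb1 : b ≤ p - 1) :
    StrictConvexOn ℝ (Set.univ : Set (ℝ × ℝ))
      (fun q : ℝ × ℝ =>
        (a / p) * (|q.1| ^ p + 2 * b * |q.1| ^ (p / 2) * |q.2| ^ (p / 2) + |q.2| ^ p)) := by
  refine ⟨convex_univ, fun x _ y _ hxy w₁ w₂ hw₁ hw₂ hw => ?_⟩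
  have hd : y.1 - x.1 ≠ 0 ∨ y.2 - x.2 ≠ 0 := by
    by_contra h
    push_neg at h
    obtain ⟨h1, h2⟩ := h
    exact hxy (Prod.ext (by linarith [sub_eq_zero.mp h1]) (by linarith [sub_eq_zero.mp h2])).symm
  have hkey := key1d p b hp hb0 hb1 x.1 (y.1 - x.1) x.2 (y.2 - x.2) hd
  have H := hkey.2 (Set.mem_univ (0:ℝ)) (Set.mem_univ (1:ℝ)) (by norm_num) hw₁ hw₂ hw
  simp only [smul_eq_mul, mul_zero, mul_one, zero_add, add_zero] at H
  have r1 : x.1 + (y.1 - x.1) = y.1 := by ring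
  have r2 : x.2 + (y.2 - x.2) = y.2 := by ring
  have hw₁' : w₁ = 1 - w₂ := by linarith
  have r3 : x.1 + (y.1 - x.1) * w₂ = w₁ * x.1 + w₂ * y.1 := by rw [hw₁']; ring
  have r4 : x.2 + (y.2 - x.2) * w₂ = w₁ * x.2 + w₂ * y.2 := by rw [hw₁']; ring
  rw [r1, r2, r3, r4] at H
  simp only [Prod.fst_add, Prod.snd_add, Prod.smul_fst, Prod.smul_snd, smul_eq_mul]
  have hap : 0 < a / p := by positivity
  nlinarith [mul_lt_mul_of_pos_left H hap]
end

section
/- For every real p > 2, every a > 0 and every b with 0 ≤ b ≤ p − 1, the gradient map ∇f : ℝ² → ℝ², ∇f(s,t) = ( a(|s|^{p/2} + b|t|^{p/2})|s|^{p/2−2}s , a(|t|^{p/2} + b|s|^{p/2})|t|^{p/2−2}t ), is a homeomorphism of ℝ² onto ℝ². -/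
open Real Filter

/-- K1 -/
lemma K1 {x : ℝ} (hx : 0 < x) : Real.sinh x < x * Real.cosh x := by
  have h : StrictMonoOn (fun x : ℝ => x * Real.cosh x - Real.sinh x) (Set.Ici 0) := by
    apply strictMonoOn_of_deriv_pos (convex_Ici 0)
    · fun_prop
    · intro y hy
      rw [interior_Ici] at hy
      have hd : HasDerivAt (fun x : ℝ => x * Real.cosh x - Real.sinh x)
          (1 * Real.cosh y + y * Real.sinh y - Real.cosh y) y :=
        ((hasDerivAt_id y).mul (Real.hasDerivAt_cosh y)).sub (Real.hasDerivAt_sinh y)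
      rw [hd.deriv]
      have hy' : (0:ℝ) < y := hy
      have := Real.sinh_pos_iff.2 hy'
      nlinarith
  have := h (Set.self_mem_Ici) (Set.mem_Ici.2 hx.le) hx
  simpa using this

/-- K2 : sinh x / x strictly increasing -/
lemma K2 {A C : ℝ} (hA : 0 < A) (hAC : A < C) : C * Real.sinh A < A * Real.sinh C := by
  have hC : 0 < C := hA.trans hAC
  have h : StrictMonoOn (fun x : ℝ => Real.sinh x / x) (Set.Ioi 0) := by
    apply strictMonoOn_of_deriv_pos (convex_Ioi 0)
    · apply ContinuousOn.div Real.continuous_sinh.continuousOn continuousOn_id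
      intro y hy; exact ne_of_gt hy
    · intro y hy
      rw [interior_Ioi] at hy
      have hy0 : (0:ℝ) < y := hy
      have hd : HasDerivAt (fun x : ℝ => Real.sinh x / x)
          ((Real.cosh y * y - Real.sinh y * 1) / (y ^ 2)) y :=
        (Real.hasDerivAt_sinh y).div (hasDerivAt_id y) hy0.ne'
      rw [hd.deriv]
      have := K1 hy0
      have h2 : 0 < y ^ 2 := by positivity
      apply div_pos; nlinarith; exact h2
  have := h (Set.mem_Ioi.2 hA) (Set.mem_Ioi.2 hC) hAC
  rw [div_lt_div_iff₀ hA hC] at this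
  linarith

/-- K3 -/
lemma K3 {c S : ℝ} (hc : 1 < c) (hS : 0 < S) :
    c ^ 2 * Real.cosh S - Real.cosh (c * S) < c ^ 2 - 1 := by
  have h : StrictAntiOn (fun S : ℝ => c ^ 2 * Real.cosh S - Real.cosh (c * S)) (Set.Ici 0) := by
    apply strictAntiOn_of_deriv_neg (convex_Ici 0)
    · fun_prop
    · intro y hy
      rw [interior_Ici] at hy
      have hy' : (0:ℝ) < y := hy
      have hd : HasDerivAt (fun S : ℝ => c ^ 2 * Real.cosh S - Real.cosh (c * S))
          (c ^ 2 * Real.sinh y - Real.sinh (c * y) * c) y := by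
        have h1 : HasDerivAt (fun S : ℝ => Real.cosh (c * S)) (Real.sinh (c * y) * c) y := by
          have := (Real.hasDerivAt_cosh (c * y)).comp y ((hasDerivAt_id y).const_mul c)
          simpa [mul_comm, Function.comp_def] using this
        exact ((Real.hasDerivAt_cosh y).const_mul (c ^ 2)).sub h1
      rw [hd.deriv]
      have hk2 := K2 hy' (by nlinarith : y < c * y)
      nlinarith
  have := h (Set.self_mem_Ici) (Set.mem_Ici.2 hS.le) hS
  simpa using this

/-- product-to-sum -/
lemma sinh_mul_sinh (x y : ℝ) :
    2 * (Real.sinh x * Real.sinh y) = Real.cosh (x + y) - Real.cosh (x - y) := by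
  rw [Real.cosh_add, Real.cosh_sub]; ring

/-- K4 core -/
lemma K4core {m k c b ds dt : ℝ} (hm : m = k + 1) (hc : c = m + k) (hc1 : 1 < c)
    (hb0 : 0 ≤ b) (hbc : b ≤ c) (hds : 0 < ds) (hdt : 0 < dt) :
    b ^ 2 * (Real.sinh (m * dt - k * ds) * Real.sinh (m * ds - k * dt)) <
      Real.sinh (c * ds) * Real.sinh (c * dt) := by
  have key1 : 2 * (Real.sinh (m * dt - k * ds) * Real.sinh (m * ds - k * dt))
      = Real.cosh (ds + dt) - Real.cosh (c * (ds - dt)) := by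
    rw [sinh_mul_sinh]
    have e1 : m * dt - k * ds + (m * ds - k * dt) = ds + dt := by rw [hm]; ring
    have e2 : m * dt - k * ds - (m * ds - k * dt) = -(c * (ds - dt)) := by
      rw [hc, hm]; ring
    rw [e1, e2, Real.cosh_neg]
  have key2 : 2 * (Real.sinh (c * ds) * Real.sinh (c * dt))
      = Real.cosh (c * (ds + dt)) - Real.cosh (c * (ds - dt)) := by
    rw [sinh_mul_sinh]
    have e1 : c * ds + c * dt = c * (ds + dt) := by ring
    have e2 : c * ds - c * dt = c * (ds - dt) := by ring
    rw [e1, e2]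
  have hc0 : (0:ℝ) < c := by linarith
  have hE1 : 1 ≤ Real.cosh (c * (ds - dt)) := Real.one_le_cosh _
  have hEc : Real.cosh (c * (ds - dt)) < Real.cosh (c * (ds + dt)) := by
    rw [Real.cosh_lt_cosh]
    have h1 : |ds - dt| < ds + dt := abs_sub_lt_iff.2 ⟨by linarith, by linarith⟩
    calc |c * (ds - dt)| = c * |ds - dt| := by
          rw [abs_mul, abs_of_pos hc0]
      _ < c * (ds + dt) := by exact (mul_lt_mul_iff_right₀ hc0).2 h1
      _ ≤ |c * (ds + dt)| := le_abs_self _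
  set E := Real.cosh (c * (ds - dt))
  rcases le_or_gt (Real.cosh (ds + dt)) E with hcase | hcase
  · -- LHS ≤ 0 < RHS
    nlinarith [sq_nonneg b]
  · have hb2 : b ^ 2 ≤ c ^ 2 := by nlinarith
    have hS0 : 0 < ds + dt := by linarith
    have hk3 := K3 hc1 hS0
    have hc21 : (0:ℝ) ≤ c ^ 2 - 1 := by nlinarith
    nlinarith [mul_nonneg (sub_nonneg.2 hb2) (sub_pos.2 hcase).le,
      mul_nonneg hc21 (by linarith : (0:ℝ) ≤ E - 1), hk3, key1, key2]

lemma expdiff2 (u v : ℝ) :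
    Real.exp (u + v) - Real.exp (u - v) = 2 * Real.exp u * Real.sinh v := by
  rw [Real.sinh_eq, Real.exp_add, Real.exp_sub, Real.exp_neg]
  have := Real.exp_ne_zero v
  field_simp

lemma INEQ {m k c b : ℝ} (hm : m = k + 1) (hc : c = m + k) (hc1 : 1 < c)
    (hb0 : 0 ≤ b) (hbc : b ≤ c) {s₁ s₂ t₁ t₂ : ℝ}
    (hs2 : 0 < s₂) (hss : s₂ < s₁) (ht1 : 0 < t₁) (htt : t₁ < t₂) :
    b ^ 2 * ((t₂ ^ m * s₂ ^ k - t₁ ^ m * s₁ ^ k) * (s₁ ^ m * t₁ ^ k - s₂ ^ m * t₂ ^ k)) <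
      (s₁ ^ c - s₂ ^ c) * (t₂ ^ c - t₁ ^ c) := by
  have hs1 : 0 < s₁ := hs2.trans hss
  have ht2 : 0 < t₂ := ht1.trans htt
  set σ₁ := Real.log s₁ with hσ₁
  set σ₂ := Real.log s₂ with hσ₂
  set τ₁ := Real.log t₁ with hτ₁
  set τ₂ := Real.log t₂ with hτ₂
  have hds : 0 < (σ₁ - σ₂) / 2 := by
    have := Real.log_lt_log hs2 hss; simp only [← hσ₁, ← hσ₂] at this; linarith
  have hdt : 0 < (τ₂ - τ₁) / 2 := by
    have := Real.log_lt_log ht1 htt; simp only [← hτ₁, ← hτ₂] at this; linarith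
  have Hd1 : s₁ ^ c - s₂ ^ c
      = 2 * Real.exp (c * (σ₁ + σ₂) / 2) * Real.sinh (c * ((σ₁ - σ₂) / 2)) := by
    rw [Real.rpow_def_of_pos hs1, Real.rpow_def_of_pos hs2, ← expdiff2]
    simp only [hσ₁, hσ₂, hτ₁, hτ₂]
    congr 1 <;> ring
  have Hd2 : t₂ ^ c - t₁ ^ c
      = 2 * Real.exp (c * (τ₁ + τ₂) / 2) * Real.sinh (c * ((τ₂ - τ₁) / 2)) := by
    rw [Real.rpow_def_of_pos ht2, Real.rpow_def_of_pos ht1, ← expdiff2]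
    simp only [hσ₁, hσ₂, hτ₁, hτ₂]
    congr 1 <;> ring
  have Hd3 : t₂ ^ m * s₂ ^ k - t₁ ^ m * s₁ ^ k
      = 2 * Real.exp ((m * (τ₁ + τ₂) + k * (σ₁ + σ₂)) / 2) *
        Real.sinh (m * ((τ₂ - τ₁) / 2) - k * ((σ₁ - σ₂) / 2)) := by
    rw [Real.rpow_def_of_pos ht2, Real.rpow_def_of_pos ht1,
      Real.rpow_def_of_pos hs2, Real.rpow_def_of_pos hs1,
      ← Real.exp_add, ← Real.exp_add, ← expdiff2]
    simp only [hσ₁, hσ₂, hτ₁, hτ₂]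
    congr 1 <;> ring
  have Hd4 : s₁ ^ m * t₁ ^ k - s₂ ^ m * t₂ ^ k
      = 2 * Real.exp ((m * (σ₁ + σ₂) + k * (τ₁ + τ₂)) / 2) *
        Real.sinh (m * ((σ₁ - σ₂) / 2) - k * ((τ₂ - τ₁) / 2)) := by
    rw [Real.rpow_def_of_pos hs1, Real.rpow_def_of_pos hs2,
      Real.rpow_def_of_pos ht1, Real.rpow_def_of_pos ht2,
      ← Real.exp_add, ← Real.exp_add, ← expdiff2]
    simp only [hσ₁, hσ₂, hτ₁, hτ₂]
    congr 1 <;> ring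
  rw [Hd1, Hd2, Hd3, Hd4]
  have hexp : Real.exp ((m * (τ₁ + τ₂) + k * (σ₁ + σ₂)) / 2) *
      Real.exp ((m * (σ₁ + σ₂) + k * (τ₁ + τ₂)) / 2)
      = Real.exp (c * (σ₁ + σ₂) / 2) * Real.exp (c * (τ₁ + τ₂) / 2) := by
    rw [← Real.exp_add, ← Real.exp_add]
    congr 1
    rw [hc]; ring
  have hkey := K4core hm hc hc1 hb0 hbc hds hdt
  calc b ^ 2 * (2 * Real.exp ((m * (τ₁ + τ₂) + k * (σ₁ + σ₂)) / 2) *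
        Real.sinh (m * ((τ₂ - τ₁) / 2) - k * ((σ₁ - σ₂) / 2)) *
        (2 * Real.exp ((m * (σ₁ + σ₂) + k * (τ₁ + τ₂)) / 2) *
          Real.sinh (m * ((σ₁ - σ₂) / 2) - k * ((τ₂ - τ₁) / 2))))
      = (4 * (Real.exp ((m * (τ₁ + τ₂) + k * (σ₁ + σ₂)) / 2) *
          Real.exp ((m * (σ₁ + σ₂) + k * (τ₁ + τ₂)) / 2))) *
        (b ^ 2 * (Real.sinh (m * ((τ₂ - τ₁) / 2) - k * ((σ₁ - σ₂) / 2)) *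
          Real.sinh (m * ((σ₁ - σ₂) / 2) - k * ((τ₂ - τ₁) / 2)))) := by ring
    _ < (4 * (Real.exp ((m * (τ₁ + τ₂) + k * (σ₁ + σ₂)) / 2) *
          Real.exp ((m * (σ₁ + σ₂) + k * (τ₁ + τ₂)) / 2))) *
        (Real.sinh (c * ((σ₁ - σ₂) / 2)) * Real.sinh (c * ((τ₂ - τ₁) / 2))) := by
        apply mul_lt_mul_of_pos_left hkey (by positivity)
    _ = 2 * Real.exp (c * (σ₁ + σ₂) / 2) * Real.sinh (c * ((σ₁ - σ₂) / 2)) *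
        (2 * Real.exp (c * (τ₁ + τ₂) / 2) * Real.sinh (c * ((τ₂ - τ₁) / 2))) := by
        rw [hexp]; ring

section Inj

variable {m b : ℝ}

/-- auxiliary polynomial form on the nonnegative quadrant -/
noncomputable def W (m b s t : ℝ) : ℝ := s ^ (m + (m - 1)) + b * t ^ m * s ^ (m - 1)

lemma W_zero (hm : 1 < m) (b t : ℝ) : W m b 0 t = 0 := by
  unfold W
  rw [Real.zero_rpow (by linarith), Real.zero_rpow (by linarith)]
  ring

lemma W_pos (hm : 1 < m) (hb : 0 ≤ b) {s t : ℝ} (hs : 0 < s) (ht : 0 ≤ t) :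
    0 < W m b s t := by
  unfold W
  have h1 : 0 < s ^ (m + (m - 1)) := Real.rpow_pos_of_pos hs _
  have h2 : 0 ≤ b * t ^ m * s ^ (m - 1) := by positivity
  linarith

lemma W_strictMono_left (hm : 1 < m) (hb : 0 ≤ b) {s₁ s₂ t : ℝ}
    (hs2 : 0 ≤ s₂) (hss : s₂ < s₁) (ht : 0 ≤ t) : W m b s₂ t < W m b s₁ t := by
  unfold W
  have h1 : s₂ ^ (m + (m - 1)) < s₁ ^ (m + (m - 1)) :=
    Real.rpow_lt_rpow hs2 hss (by linarith)
  have h2 : b * t ^ m * s₂ ^ (m - 1) ≤ b * t ^ m * s₁ ^ (m - 1) := by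
    have := Real.rpow_le_rpow hs2 hss.le (by linarith : (0:ℝ) ≤ m - 1)
    have h3 : 0 ≤ b * t ^ m := by positivity
    nlinarith
  linarith

lemma W_mono_right (hm : 1 < m) (hb : 0 ≤ b) {s t₁ t₂ : ℝ}
    (hs : 0 ≤ s) (ht2 : 0 ≤ t₂) (htt : t₂ ≤ t₁) : W m b s t₂ ≤ W m b s t₁ := by
  unfold W
  have := Real.rpow_le_rpow ht2 htt (by linarith : (0:ℝ) ≤ m)
  have hs' : 0 ≤ s ^ (m - 1) := Real.rpow_nonneg hs _
  nlinarith [mul_nonneg (mul_nonneg hb (sub_nonneg.2 this)) hs']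

/-- hard case -/
lemma W_hard (hm : 1 < m) (hb : 0 ≤ b) (hbc : b ≤ m + (m - 1)) {s₁ s₂ t₁ t₂ : ℝ}
    (hs2 : 0 < s₂) (hss : s₂ < s₁) (ht1 : 0 < t₁) (htt : t₁ < t₂)
    (e1 : W m b s₁ t₁ = W m b s₂ t₂) (e2 : W m b t₁ s₁ = W m b t₂ s₂) : False := by
  unfold W at e1 e2
  have hineq := INEQ (m := m) (k := m - 1) (c := m + (m - 1)) (b := b)
    (by ring) rfl (by linarith) hb hbc hs2 hss ht1 htt
  have hprod : (s₁ ^ (m + (m - 1)) - s₂ ^ (m + (m - 1))) *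
      (t₂ ^ (m + (m - 1)) - t₁ ^ (m + (m - 1)))
      = b ^ 2 * ((t₂ ^ m * s₂ ^ (m - 1) - t₁ ^ m * s₁ ^ (m - 1)) *
        (s₁ ^ m * t₁ ^ (m - 1) - s₂ ^ m * t₂ ^ (m - 1))) := by
    have P1 : s₁ ^ (m + (m - 1)) - s₂ ^ (m + (m - 1))
        = b * (t₂ ^ m * s₂ ^ (m - 1) - t₁ ^ m * s₁ ^ (m - 1)) := by linarith
    have P2 : t₂ ^ (m + (m - 1)) - t₁ ^ (m + (m - 1))
        = b * (s₁ ^ m * t₁ ^ (m - 1) - s₂ ^ m * t₂ ^ (m - 1)) := by linarith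
    rw [P1, P2]; ring
  linarith [hineq, hprod.symm.le]

/-- one-sided case analysis -/
lemma W_oneside (hm : 1 < m) (hb : 0 ≤ b) (hbc : b ≤ m + (m - 1)) {s₁ s₂ t₁ t₂ : ℝ}
    (hs1 : 0 ≤ s₁) (hs2 : 0 ≤ s₂) (ht1 : 0 ≤ t₁) (ht2 : 0 ≤ t₂)
    (hss : s₂ < s₁)
    (e1 : W m b s₁ t₁ = W m b s₂ t₂) (e2 : W m b t₁ s₁ = W m b t₂ s₂) : False := by
  rcases lt_or_ge t₁ t₂ with htt | htt
  · -- hard case, need positivity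
    rcases eq_or_lt_of_le hs2 with h0 | hs2'
    · -- s₂ = 0
      have := W_pos hm hb (h0 ▸ hss) ht1
      rw [e1, ← h0, W_zero hm] at this
      exact lt_irrefl _ this
    rcases eq_or_lt_of_le ht1 with h0 | ht1'
    · -- t₁ = 0
      have := W_pos hm hb (h0 ▸ htt) hs2
      rw [← e2, ← h0, W_zero hm] at this
      exact lt_irrefl _ this
    exact W_hard hm hb hbc hs2' hss ht1' htt e1 e2
  · -- t₂ ≤ t₁ : contradiction with monotonicity
    have h1 : W m b s₂ t₂ ≤ W m b s₂ t₁ := W_mono_right hm hb hs2 ht2 htt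
    have h2 : W m b s₂ t₁ < W m b s₁ t₁ := W_strictMono_left hm hb hs2 hss ht1
    linarith [e1.symm.le]

/-- nonnegative injectivity -/
lemma W_inj (hm : 1 < m) (hb : 0 ≤ b) (hbc : b ≤ m + (m - 1)) {s₁ s₂ t₁ t₂ : ℝ}
    (hs1 : 0 ≤ s₁) (hs2 : 0 ≤ s₂) (ht1 : 0 ≤ t₁) (ht2 : 0 ≤ t₂)
    (e1 : W m b s₁ t₁ = W m b s₂ t₂) (e2 : W m b t₁ s₁ = W m b t₂ s₂) :
    s₁ = s₂ ∧ t₁ = t₂ := by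
  rcases lt_trichotomy s₁ s₂ with h | h | h
  · exact absurd (W_oneside hm hb hbc hs2 hs1 ht2 ht1 h e1.symm e2.symm) id
  · subst h
    refine ⟨rfl, ?_⟩
    rcases lt_trichotomy t₁ t₂ with h | h | h
    · exact absurd (e2.symm ▸ W_strictMono_left hm hb ht1 h hs1) (by
        have := W_strictMono_left hm hb ht1 h hs1
        intro _; rw [e2] at this; exact lt_irrefl _ this)
    · exact h
    · have := W_strictMono_left hm hb ht2 h hs1
      rw [e2] at this; exact absurd this (lt_irrefl _)
  · exact absurd (W_oneside hm hb hbc hs1 hs2 ht1 ht2 h e1 e2) id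

end Inj

section Elayer

/-- the component function (without the factor `a`) -/
noncomputable def Ecomp (m b s t : ℝ) : ℝ :=
  (|s| ^ m + b * |t| ^ m) * (|s| ^ (m - 2) * s)

lemma Ecomp_zero (m b t : ℝ) : Ecomp m b 0 t = 0 := by
  unfold Ecomp; simp

lemma Ecomp_pos {m b s : ℝ} (hm : 1 < m) (hb : 0 ≤ b) (hs : 0 < s) (t : ℝ) :
    0 < Ecomp m b s t := by
  unfold Ecomp
  have h1 : 0 < |s| ^ m := Real.rpow_pos_of_pos (abs_pos.2 hs.ne') _
  have h2 : 0 ≤ b * |t| ^ m := by positivity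
  have h3 : 0 < |s| ^ (m - 2) := Real.rpow_pos_of_pos (abs_pos.2 hs.ne') _
  have := mul_pos h3 hs
  nlinarith

lemma Ecomp_neg {m b s : ℝ} (hm : 1 < m) (hb : 0 ≤ b) (hs : s < 0) (t : ℝ) :
    Ecomp m b s t < 0 := by
  unfold Ecomp
  have h1 : 0 < |s| ^ m := Real.rpow_pos_of_pos (abs_pos.2 hs.ne) _
  have h2 : 0 ≤ b * |t| ^ m := by positivity
  have h3 : 0 < |s| ^ (m - 2) := Real.rpow_pos_of_pos (abs_pos.2 hs.ne) _
  have := mul_neg_of_pos_of_neg h3 hs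
  nlinarith

lemma Ecomp_abs (m b : ℝ) (hb : 0 ≤ b) (s t : ℝ) :
    Ecomp m b |s| |t| = |Ecomp m b s t| := by
  unfold Ecomp
  rw [abs_abs, abs_abs, abs_mul, abs_mul]
  congr 1
  · exact (abs_of_nonneg (by positivity)).symm
  · rw [abs_of_nonneg (Real.rpow_nonneg (abs_nonneg s) _)]

lemma Ecomp_eq_W {m b s t : ℝ} (hm : 1 < m) (hs : 0 ≤ s) (ht : 0 ≤ t) :
    Ecomp m b s t = W m b s t := by
  unfold Ecomp W
  rcases eq_or_lt_of_le hs with h | h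
  · rw [← h]
    simp [Real.zero_rpow (by linarith : m + (m - 1) ≠ 0),
      Real.zero_rpow (by linarith : m - 1 ≠ 0)]
  · rw [abs_of_pos h, abs_of_nonneg ht]
    have e1 : s ^ (m - 2) * s = s ^ (m - 1) := by
      rw [show m - 1 = (m - 2) + 1 by ring, Real.rpow_add_one h.ne']
    have e2 : s ^ m * s ^ (m - 1) = s ^ (m + (m - 1)) := (Real.rpow_add h _ _).symm
    rw [e1, show (s ^ m + b * t ^ m) * s ^ (m - 1)
      = s ^ m * s ^ (m - 1) + b * t ^ m * s ^ (m - 1) from by ring, e2]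

/-- full injectivity step -/
lemma Ecomp_inj {m b : ℝ} (hm : 1 < m) (hb : 0 ≤ b) (hbc : b ≤ m + (m - 1))
    {s₁ s₂ t₁ t₂ : ℝ}
    (e1 : Ecomp m b s₁ t₁ = Ecomp m b s₂ t₂) (e2 : Ecomp m b t₁ s₁ = Ecomp m b t₂ s₂) :
    s₁ = s₂ ∧ t₁ = t₂ := by
  have habs : |s₁| = |s₂| ∧ |t₁| = |t₂| := by
    apply W_inj hm hb hbc (abs_nonneg s₁) (abs_nonneg s₂) (abs_nonneg t₁) (abs_nonneg t₂)
    · rw [← Ecomp_eq_W hm (abs_nonneg s₁) (abs_nonneg t₁),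
        ← Ecomp_eq_W hm (abs_nonneg s₂) (abs_nonneg t₂),
        Ecomp_abs m b hb, Ecomp_abs m b hb, e1]
    · rw [← Ecomp_eq_W hm (abs_nonneg t₁) (abs_nonneg s₁),
        ← Ecomp_eq_W hm (abs_nonneg t₂) (abs_nonneg s₂),
        Ecomp_abs m b hb, Ecomp_abs m b hb, e2]
  constructor
  · rcases lt_trichotomy s₁ 0 with h | h | h
    · have h1 := Ecomp_neg hm hb h t₁
      have h2 : s₂ < 0 := by
        by_contra h2
        push_neg at h2
        rcases eq_or_lt_of_le h2 with h3 | h3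
        · rw [e1, ← h3, Ecomp_zero] at h1; exact lt_irrefl _ h1
        · have := Ecomp_pos hm hb h3 t₂; rw [← e1] at this; linarith
      have := habs.1
      rw [abs_of_neg h, abs_of_neg h2] at this; linarith
    · rw [h, Ecomp_zero] at e1
      rcases lt_trichotomy s₂ 0 with h2 | h2 | h2
      · have := Ecomp_neg hm hb h2 t₂; rw [← e1] at this; exact absurd this (lt_irrefl _)
      · rw [h, h2]
      · have := Ecomp_pos hm hb h2 t₂; rw [← e1] at this; exact absurd this (lt_irrefl _)
    · have h1 := Ecomp_pos hm hb h t₁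
      have h2 : 0 < s₂ := by
        by_contra h2
        push_neg at h2
        rcases eq_or_lt_of_le h2 with h3 | h3
        · rw [e1, h3, Ecomp_zero] at h1; exact lt_irrefl _ h1
        · have := Ecomp_neg hm hb h3 t₂; rw [← e1] at this; linarith
      have := habs.1
      rw [abs_of_pos h, abs_of_pos h2] at this; linarith
  · rcases lt_trichotomy t₁ 0 with h | h | h
    · have h1 := Ecomp_neg hm hb h s₁
      have h2 : t₂ < 0 := by
        by_contra h2
        push_neg at h2
        rcases eq_or_lt_of_le h2 with h3 | h3
        · rw [e2, ← h3, Ecomp_zero] at h1; exact lt_irrefl _ h1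
        · have := Ecomp_pos hm hb h3 s₂; rw [← e2] at this; linarith
      have := habs.2
      rw [abs_of_neg h, abs_of_neg h2] at this; linarith
    · rw [h, Ecomp_zero] at e2
      rcases lt_trichotomy t₂ 0 with h2 | h2 | h2
      · have := Ecomp_neg hm hb h2 s₂; rw [← e2] at this; exact absurd this (lt_irrefl _)
      · rw [h, h2]
      · have := Ecomp_pos hm hb h2 s₂; rw [← e2] at this; exact absurd this (lt_irrefl _)
    · have h1 := Ecomp_pos hm hb h s₁
      have h2 : 0 < t₂ := by
        by_contra h2
        push_neg at h2
        rcases eq_or_lt_of_le h2 with h3 | h3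
        · rw [e2, h3, Ecomp_zero] at h1; exact lt_irrefl _ h1
        · have := Ecomp_neg hm hb h3 s₂; rw [← e2] at this; linarith
      have := habs.2
      rw [abs_of_pos h, abs_of_pos h2] at this; linarith

end Elayer


section Surj

lemma pow_merge {p : ℝ} (hp : 2 < p) (s : ℝ) :
    |s| ^ (p / 2) * (|s| ^ (p / 2 - 2) * s) = |s| ^ (p - 2) * s := by
  rcases eq_or_ne s 0 with h | h
  · subst h; simp
  · rw [← mul_assoc, ← Real.rpow_add (abs_pos.2 h)]
    ring_nf

lemma surj_comp {p a b : ℝ} (hp : 2 < p) (ha : 0 < a) (hb0 : 0 ≤ b) (u v : ℝ) :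
    ∃ s t : ℝ, a * ((|s| ^ (p / 2) + b * |t| ^ (p / 2)) * (|s| ^ (p / 2 - 2) * s)) = u ∧
      a * ((|t| ^ (p / 2) + b * |s| ^ (p / 2)) * (|t| ^ (p / 2 - 2) * t)) = v := by
  have hp0 : (0:ℝ) < p := by linarith
  have hp1 : (1:ℝ) < p := by linarith
  have hm1 : (1:ℝ) < p / 2 := by linarith
  set m := p / 2 with hm
  -- the energy functional
  set h : ℝ × ℝ → ℝ := fun q =>
    a / p * (|q.1| ^ p + 2 * b * (|q.1| ^ m * |q.2| ^ m) + |q.2| ^ p) - u * q.1 - v * q.2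
    with hh
  have hcont : Continuous h := by
    have c1 : Continuous fun q : ℝ × ℝ => |q.1| ^ p :=
      (continuous_fst.abs).rpow_const (fun x => Or.inr (by linarith))
    have c2 : Continuous fun q : ℝ × ℝ => |q.1| ^ m :=
      (continuous_fst.abs).rpow_const (fun x => Or.inr (by linarith))
    have c3 : Continuous fun q : ℝ × ℝ => |q.2| ^ m :=
      (continuous_snd.abs).rpow_const (fun x => Or.inr (by linarith))
    have c4 : Continuous fun q : ℝ × ℝ => |q.2| ^ p :=
      (continuous_snd.abs).rpow_const (fun x => Or.inr (by linarith))
    exact ((continuous_const.mul ((c1.add (continuous_const.mul (c2.mul c3))).add c4)).sub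
      (continuous_const.mul continuous_fst)).sub (continuous_const.mul continuous_snd)
  have hbound : ∀ q : ℝ × ℝ, a / p * ‖q‖ ^ p - (|u| + |v|) * ‖q‖ ≤ h q := by
    intro q
    have hnorm : ‖q‖ = max |q.1| |q.2| := by
      rw [Prod.norm_def, Real.norm_eq_abs, Real.norm_eq_abs]
    have h1 : ‖q‖ ^ p ≤ |q.1| ^ p + |q.2| ^ p := by
      rcases le_total |q.1| |q.2| with hc | hc
      · rw [hnorm, max_eq_right hc]
        have : (0:ℝ) ≤ |q.1| ^ p := Real.rpow_nonneg (abs_nonneg _) _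
        linarith
      · rw [hnorm, max_eq_left hc]
        have : (0:ℝ) ≤ |q.2| ^ p := Real.rpow_nonneg (abs_nonneg _) _
        linarith
    have h2 : u * q.1 + v * q.2 ≤ (|u| + |v|) * ‖q‖ := by
      have e1 : u * q.1 ≤ |u| * ‖q‖ := by
        calc u * q.1 ≤ |u * q.1| := le_abs_self _
          _ = |u| * |q.1| := abs_mul u q.1
          _ ≤ |u| * ‖q‖ := by
              rw [hnorm]
              exact mul_le_mul_of_nonneg_left (le_max_left _ _) (abs_nonneg u)
      have e2 : v * q.2 ≤ |v| * ‖q‖ := by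
        calc v * q.2 ≤ |v * q.2| := le_abs_self _
          _ = |v| * |q.2| := abs_mul v q.2
          _ ≤ |v| * ‖q‖ := by
              rw [hnorm]
              exact mul_le_mul_of_nonneg_left (le_max_right _ _) (abs_nonneg v)
      linarith [e1, e2]
    have hmid : (0:ℝ) ≤ 2 * b * (|q.1| ^ m * |q.2| ^ m) := by positivity
    have hap : (0:ℝ) ≤ a / p := by positivity
    rw [hh]
    simp only
    nlinarith [mul_le_mul_of_nonneg_left h1 hap]
  have hcoer : Filter.Tendsto h (Filter.cocompact (ℝ × ℝ)) Filter.atTop := by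
    have t1 : Filter.Tendsto (fun r : ℝ => a / p * r ^ p - (|u| + |v|) * r)
        Filter.atTop Filter.atTop := by
      have t2 : Filter.Tendsto (fun r : ℝ => (a / p * r ^ (p - 1) - (|u| + |v|)) * r)
          Filter.atTop Filter.atTop := by
        apply Filter.Tendsto.atTop_mul_atTop₀ _ Filter.tendsto_id
        apply Filter.tendsto_atTop_add_const_right
        exact Filter.Tendsto.const_mul_atTop (by positivity)
          (tendsto_rpow_atTop (by linarith : (0:ℝ) < p - 1))
      apply t2.congr'
      filter_upwards [Filter.eventually_gt_atTop 0] with r hr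
      rw [sub_mul, mul_assoc, ← Real.rpow_add_one hr.ne']
      ring_nf
    have := t1.comp (tendsto_norm_cocompact_atTop (E := ℝ × ℝ))
    exact Filter.tendsto_atTop_mono hbound this
  obtain ⟨q₀, hq₀⟩ := hcont.exists_forall_le hcoer
  obtain ⟨s₀, t₀⟩ := q₀
  refine ⟨s₀, t₀, ?_, ?_⟩
  · -- partial derivative in s vanishes
    set φ : ℝ → ℝ := fun s =>
      a / p * (|s| ^ p + 2 * b * (|s| ^ m * |t₀| ^ m) + |t₀| ^ p) - u * s - v * t₀ with hφ
    have hloc : IsLocalMin φ s₀ := Filter.Eventually.of_forall (fun s => hq₀ (s, t₀))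
    have hd : HasDerivAt φ
        (a / p * (p * |s₀| ^ (p - 2) * s₀ +
          2 * b * (m * |s₀| ^ (m - 2) * s₀ * |t₀| ^ m)) - u) s₀ := by
      have h1 := hasDerivAt_abs_rpow s₀ hp1
      have h2 := (hasDerivAt_abs_rpow s₀ hm1).mul_const (|t₀| ^ m)
      have h3 := (h1.add ((h2.const_mul (2 * b)).add
        (hasDerivAt_const s₀ (|t₀| ^ p)))).const_mul (a / p)
      have h4 := (h3.sub ((hasDerivAt_id s₀).const_mul u)).sub (hasDerivAt_const s₀ (v * t₀))
      refine (h4.congr_deriv ?_).congr_of_eventuallyEq (Filter.Eventually.of_forall fun s => ?_)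
      · ring
      · rw [hφ]; simp only [id_eq, Pi.add_apply, Pi.sub_apply]; ring
    have hzero := hloc.hasDerivAt_eq_zero hd
    have hmerge := pow_merge hp s₀
    rw [hm]
    have key : a * ((|s₀| ^ (p / 2) + b * |t₀| ^ (p / 2)) * (|s₀| ^ (p / 2 - 2) * s₀))
        = a / p * (p * (|s₀| ^ (p / 2) * (|s₀| ^ (p / 2 - 2) * s₀)) +
          2 * b * (p / 2 * |s₀| ^ (p / 2 - 2) * s₀ * |t₀| ^ (p / 2))) := by
      field_simp
    rw [key, hmerge]
    rw [hm] at hzero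
    linear_combination hzero
  · -- partial derivative in t vanishes
    set φ : ℝ → ℝ := fun t =>
      a / p * (|s₀| ^ p + 2 * b * (|s₀| ^ m * |t| ^ m) + |t| ^ p) - u * s₀ - v * t with hφ
    have hloc : IsLocalMin φ t₀ :=
      Filter.Eventually.of_forall (fun t => hq₀ (s₀, t))
    have hd : HasDerivAt φ
        (a / p * (2 * b * (|s₀| ^ m * (m * |t₀| ^ (m - 2) * t₀)) +
          p * |t₀| ^ (p - 2) * t₀) - v) t₀ := by
      have h1 := hasDerivAt_abs_rpow t₀ hp1
      have h2 := (hasDerivAt_abs_rpow t₀ hm1).const_mul (|s₀| ^ m)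
      have h3 := ((hasDerivAt_const t₀ (|s₀| ^ p)).add
        ((h2.const_mul (2 * b)).add h1)).const_mul (a / p)
      have h4 := (h3.sub (hasDerivAt_const t₀ (u * s₀))).sub ((hasDerivAt_id t₀).const_mul v)
      refine (h4.congr_deriv ?_).congr_of_eventuallyEq (Filter.Eventually.of_forall fun t => ?_)
      · ring
      · rw [hφ]; simp only [id_eq, Pi.add_apply, Pi.sub_apply]; ring
    have hzero := hloc.hasDerivAt_eq_zero hd
    have hmerge := pow_merge hp t₀
    rw [hm]
    have key : a * ((|t₀| ^ (p / 2) + b * |s₀| ^ (p / 2)) * (|t₀| ^ (p / 2 - 2) * t₀))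
        = a / p * (2 * b * (|s₀| ^ (p / 2) * (p / 2 * |t₀| ^ (p / 2 - 2) * t₀)) +
          p * (|t₀| ^ (p / 2) * (|t₀| ^ (p / 2 - 2) * t₀))) := by
      field_simp
      ring
    rw [key, hmerge]
    rw [hm] at hzero
    linear_combination hzero

end Surj

section Assemble

lemma cont_sgn_pow {m : ℝ} (hm : 1 < m) : Continuous fun x : ℝ => |x| ^ (m - 2) * x := by
  rw [continuous_iff_continuousAt]
  intro x
  rcases eq_or_ne x 0 with rfl | hx
  · have key : Filter.Tendsto (fun y : ℝ => |y| ^ (m - 2) * y) (nhds 0) (nhds 0) := by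
      have hb : ∀ y : ℝ, ‖|y| ^ (m - 2) * y‖ ≤ |y| ^ (m - 1) := by
        intro y
        rcases eq_or_ne y 0 with rfl | hy
        · simp [Real.zero_rpow (by linarith : m - 1 ≠ 0)]
        · rw [Real.norm_eq_abs, abs_mul, abs_of_nonneg (Real.rpow_nonneg (abs_nonneg y) _),
            show m - 1 = (m - 2) + 1 by ring, Real.rpow_add_one (abs_ne_zero.2 hy)]
      have hg : Filter.Tendsto (fun y : ℝ => |y| ^ (m - 1)) (nhds 0) (nhds 0) := by
        have hc : ContinuousAt (fun y : ℝ => |y| ^ (m - 1)) 0 :=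
          (Real.continuousAt_rpow_const _ _ (Or.inr (by linarith))).comp
            continuous_abs.continuousAt
        have := hc.tendsto
        rwa [show |(0:ℝ)| ^ (m - 1) = 0 by
          simp [Real.zero_rpow (by linarith : m - 1 ≠ 0)]] at this
      exact squeeze_zero_norm hb hg
    simpa [ContinuousAt] using key
  · exact ((Real.continuousAt_rpow_const _ _ (Or.inl (abs_ne_zero.2 hx))).comp
      continuous_abs.continuousAt).mul continuousAt_id

lemma abs_Ecomp_lower {m b : ℝ} (hm : 1 < m) (hb : 0 ≤ b) {a : ℝ} (ha : 0 < a) (s t : ℝ) :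
    a * |s| ^ (m + (m - 1)) ≤ |a * Ecomp m b s t| := by
  rcases eq_or_ne s 0 with rfl | hs
  · simp [Real.zero_rpow (by linarith : m + (m - 1) ≠ 0), Ecomp_zero]
  · unfold Ecomp
    rw [abs_mul, abs_mul, abs_mul, abs_of_pos ha,
      abs_of_nonneg (by positivity : (0:ℝ) ≤ |s| ^ m + b * |t| ^ m),
      abs_of_nonneg (Real.rpow_nonneg (abs_nonneg s) _)]
    have e1 : |s| ^ (m + (m - 1)) = |s| ^ m * (|s| ^ (m - 2) * |s|) := by
      rw [show m - 1 = (m - 2) + 1 by ring] at *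
      rw [Real.rpow_add (abs_pos.2 hs), Real.rpow_add_one (abs_ne_zero.2 hs)]
    rw [e1]
    have h2 : (0:ℝ) ≤ |s| ^ (m - 2) * |s| := by positivity
    have h3 : |s| ^ m ≤ |s| ^ m + b * |t| ^ m := by
      have : (0:ℝ) ≤ b * |t| ^ m := by positivity
      linarith
    have := mul_le_mul_of_nonneg_right h3 h2
    nlinarith

end Assemble

/-- the gradient map `∇f : ℝ² → ℝ²` of
`f(s,t) = (a/p)(|s|^p + 2b|s|^(p/2)|t|^(p/2) + |t|^p)` is a homeomorphism of `ℝ²` onto `ℝ²`. -/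
theorem stmt_3 (p a b : ℝ) (hp : 2 < p) (ha : 0 < a) (hb0 : 0 ≤ b) (hb1 : b ≤ p - 1) :
    IsHomeomorph
      (fun q : ℝ × ℝ =>
        ((a * ((|q.1| ^ (p / 2) + b * |q.2| ^ (p / 2)) * (|q.1| ^ (p / 2 - 2) * q.1)),
          a * ((|q.2| ^ (p / 2) + b * |q.1| ^ (p / 2)) * (|q.2| ^ (p / 2 - 2) * q.2))) :
            ℝ × ℝ)) := by
  have hm1 : (1:ℝ) < p / 2 := by linarith
  set m := p / 2 with hm
  set Φ : ℝ × ℝ → ℝ × ℝ := fun q =>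
    (a * Ecomp m b q.1 q.2, a * Ecomp m b q.2 q.1) with hΦ
  have hΦeq : (fun q : ℝ × ℝ =>
      ((a * ((|q.1| ^ m + b * |q.2| ^ m) * (|q.1| ^ (m - 2) * q.1)),
        a * ((|q.2| ^ m + b * |q.1| ^ m) * (|q.2| ^ (m - 2) * q.2))) : ℝ × ℝ)) = Φ := by
    funext q
    rw [hΦ]
    unfold Ecomp
    rfl
  rw [hΦeq]
  have hbc : b ≤ m + (m - 1) := by rw [hm]; linarith
  -- continuity
  have hcont : Continuous Φ := by
    have c0 : Continuous fun x : ℝ => |x| ^ (m - 2) * x := cont_sgn_pow hm1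
    have c1 : Continuous fun q : ℝ × ℝ => |q.1| ^ m :=
      (continuous_fst.abs).rpow_const (fun x => Or.inr (by linarith))
    have c2 : Continuous fun q : ℝ × ℝ => |q.2| ^ m :=
      (continuous_snd.abs).rpow_const (fun x => Or.inr (by linarith))
    apply Continuous.prodMk
    · exact continuous_const.mul ((c1.add (continuous_const.mul c2)).mul (c0.comp continuous_fst))
    · exact continuous_const.mul ((c2.add (continuous_const.mul c1)).mul (c0.comp continuous_snd))
  -- injectivity
  have hinj : Function.Injective Φ := by
    intro q₁ q₂ hq
    rw [hΦ, Prod.mk.injEq] at hq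
    obtain ⟨e1, e2⟩ := hq
    have e1' := mul_left_cancel₀ ha.ne' e1
    have e2' := mul_left_cancel₀ ha.ne' e2
    obtain ⟨h1, h2⟩ := Ecomp_inj hm1 hb0 hbc e1' e2'
    exact Prod.ext h1 h2
  -- surjectivity
  have hsurj : Function.Surjective Φ := by
    intro w
    obtain ⟨s, t, h1, h2⟩ := surj_comp hp ha hb0 w.1 w.2
    refine ⟨(s, t), ?_⟩
    rw [hΦ]
    unfold Ecomp
    rw [← hm] at h1 h2
    exact Prod.ext h1 h2
  -- properness
  have hlow : ∀ q : ℝ × ℝ, a * ‖q‖ ^ (m + (m - 1)) ≤ ‖Φ q‖ := by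
    intro q
    have hnorm : ‖q‖ = max |q.1| |q.2| := by
      rw [Prod.norm_def, Real.norm_eq_abs, Real.norm_eq_abs]
    have hnormΦ : ‖Φ q‖ = max |a * Ecomp m b q.1 q.2| |a * Ecomp m b q.2 q.1| := by
      rw [hΦ, Prod.norm_def, Real.norm_eq_abs, Real.norm_eq_abs]
    rcases le_total |q.1| |q.2| with hc | hc
    · rw [hnorm, max_eq_right hc, hnormΦ]
      calc a * |q.2| ^ (m + (m - 1)) ≤ |a * Ecomp m b q.2 q.1| :=
            abs_Ecomp_lower hm1 hb0 ha _ _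
        _ ≤ _ := le_max_right _ _
    · rw [hnorm, max_eq_left hc, hnormΦ]
      calc a * |q.1| ^ (m + (m - 1)) ≤ |a * Ecomp m b q.1 q.2| :=
            abs_Ecomp_lower hm1 hb0 ha _ _
        _ ≤ _ := le_max_left _ _
  have htend : Filter.Tendsto Φ (Filter.cocompact (ℝ × ℝ)) (Filter.cocompact (ℝ × ℝ)) := by
    have hc : (0:ℝ) < m + (m - 1) := by linarith
    have h1 : Filter.Tendsto (fun q : ℝ × ℝ => a * ‖q‖ ^ (m + (m - 1)))
        (Filter.cocompact (ℝ × ℝ)) Filter.atTop :=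
      (Filter.Tendsto.const_mul_atTop ha (tendsto_rpow_atTop hc)).comp
        (tendsto_norm_cocompact_atTop (E := ℝ × ℝ))
    have hnt : Filter.Tendsto (fun q : ℝ × ℝ => ‖Φ q‖)
        (Filter.cocompact (ℝ × ℝ)) Filter.atTop :=
      Filter.tendsto_atTop_mono hlow h1
    have := tendsto_norm_atTop_iff_cobounded.1 hnt
    rwa [Metric.cobounded_eq_cocompact] at this
  have hproper : IsProperMap Φ := isProperMap_iff_tendsto_cocompact.2 ⟨hcont, htend⟩
  exact isHomeomorph_iff_continuous_isClosedMap_bijective.2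
    ⟨hcont, hproper.isClosedMap, hinj, hsurj⟩
end

section
/- Let p > 2, p′ = p/(p−1), a > 0 and 0 ≤ b ≤ p − 1. Then for all real s̄, t̄ the supremum h(s̄,t̄) = sup over (s,t) ∈ ℝ² of ( s·s̄ + t·t̄ − f(s,t) ) is finite and equals (a^{1−p′}/p′) · [ sup over σ > 0 of (|s̄| + σ|t̄|)/(1 + 2b σ^{p/2} + σ^p)^{1/p} ]^{p′}. -/
open Real Set Filter Topology


lemma aux_young {p p' a : ℝ} (hp : 1 < p) (hp' : p' = p / (p - 1)) (ha : 0 < a)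
    {A B r : ℝ} (hA : 0 ≤ A) (hB : 0 < B) (hr : 0 ≤ r) :
    r * A - a / p * (r ^ p * B) ≤ a ^ (1 - p') / p' * (A / B ^ (1 / p)) ^ p' := by
  have hpm : (0:ℝ) < p - 1 := by linarith
  have hp0 : (0:ℝ) < p := by linarith
  have hq1 : 1 < p' := by rw [hp', lt_div_iff₀ hpm]; linarith
  have hq0 : (0:ℝ) < p' := by linarith
  have hconj : p.HolderConjugate p' := by rw [hp']; exact Real.HolderConjugate.conjExponent hp
  have hab : (0:ℝ) < a * B := mul_pos ha hB
  have habp : (0:ℝ) < (a * B) ^ (1 / p) := rpow_pos_of_pos hab _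
  set X := r * (a * B) ^ (1 / p) with hX
  set Y := A / (a * B) ^ (1 / p) with hY
  have hXY : X * Y = r * A := by
    rw [hX, hY]; field_simp
  have hXp : X ^ p = r ^ p * (a * B) := by
    rw [hX, mul_rpow hr habp.le, ← Real.rpow_mul hab.le,
      one_div_mul_cancel hp0.ne', rpow_one]
  have hexp : 1 - p' = -(1 / p * p') := by
    rw [hp']; field_simp; ring
  have hYq : Y ^ p' = a ^ (1 - p') * (A / B ^ (1 / p)) ^ p' := by
    rw [hY, div_rpow hA habp.le, div_rpow hA (rpow_pos_of_pos hB _).le,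
      ← Real.rpow_mul hab.le, mul_rpow ha.le hB.le, ← Real.rpow_mul hB.le, hexp,
      Real.rpow_neg ha.le]
    field_simp
  have hyoung : X * Y ≤ X ^ p / p + Y ^ p' / p' :=
    Real.young_inequality_of_nonneg (by positivity) (by positivity) hconj
  rw [hXY, hXp, hYq] at hyoung
  have h1 : a ^ (1 - p') * (A / B ^ (1 / p)) ^ p' / p'
      = a ^ (1 - p') / p' * (A / B ^ (1 / p)) ^ p' := by ring
  have h2 : r ^ p * (a * B) / p = a / p * (r ^ p * B) := by ring
  linarith

lemma aux_young_eq {p p' a : ℝ} (hp : 1 < p) (hp' : p' = p / (p - 1)) (ha : 0 < a)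
    {A B : ℝ} (hA : 0 ≤ A) (hB : 0 < B) :
    ∃ r : ℝ, 0 ≤ r ∧
      a ^ (1 - p') / p' * (A / B ^ (1 / p)) ^ p' ≤ r * A - a / p * (r ^ p * B) := by
  have hpm : (0:ℝ) < p - 1 := by linarith
  have hp0 : (0:ℝ) < p := by linarith
  have hq1 : 1 < p' := by rw [hp', lt_div_iff₀ hpm]; linarith
  have hq0 : (0:ℝ) < p' := by linarith
  rcases hA.eq_or_lt with h0 | hApos
  · refine ⟨0, le_rfl, ?_⟩
    rw [← h0]
    simp [Real.zero_rpow hq0.ne', Real.zero_rpow hp0.ne']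
  · have hab : (0:ℝ) < a * B := mul_pos ha hB
    set T := A / (a * B) with hT
    have hTpos : 0 < T := div_pos hApos hab
    refine ⟨T ^ (p' - 1), (rpow_pos_of_pos hTpos _).le, ?_⟩
    have hqp : (p' - 1) * p = p' := by rw [hp']; field_simp; ring
    have hrp : (T ^ (p' - 1)) ^ p = T ^ p' := by
      rw [← Real.rpow_mul hTpos.le, hqp]
    have hrA : T ^ (p' - 1) * A = T ^ p' * (a * B) := by
      rw [Real.rpow_sub hTpos, rpow_one, hT]
      field_simp
    have hexp : 1 - p' = -(1 / p * p') := by rw [hp']; field_simp; ring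
    have hsplit : a ^ p' = a ^ (1 / p * p') * a := by
      rw [← Real.rpow_add_one ha.ne']
      congr 1
      rw [hp']; field_simp; ring
    have hsplitB : B ^ p' = B ^ (1 / p * p') * B := by
      rw [← Real.rpow_add_one hB.ne']
      congr 1
      rw [hp']; field_simp; ring
    have hLHS : a ^ (1 - p') / p' * (A / B ^ (1 / p)) ^ p' = T ^ p' * (a * B) / p' := by
      rw [hT, div_rpow hApos.le (rpow_pos_of_pos hB _).le,
        div_rpow hApos.le hab.le, mul_rpow ha.le hB.le,
        ← Real.rpow_mul hB.le, hexp, Real.rpow_neg ha.le, hsplit, hsplitB]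
      have haq : (0:ℝ) < a ^ (1 / p * p') := rpow_pos_of_pos ha _
      have hbq : (0:ℝ) < B ^ (1 / p * p') := rpow_pos_of_pos hB _
      field_simp
    rw [hLHS, hrp, hrA]
    have h1p : 1 - 1 / p = 1 / p' := by rw [hp']; field_simp
    have heq : T ^ p' * (a * B) - a / p * (T ^ p' * B) = T ^ p' * (a * B) * (1 - 1/p) := by
      ring
    rw [heq, h1p, mul_one_div]


section auxlim

lemma aux_limit {G : ℝ × ℝ → ℝ} {K : ℝ} (hG : Continuous G)
    (h : ∀ u v : ℝ, 0 < u → 0 < v → G (u, v) ≤ K) {u v : ℝ} (hu : 0 ≤ u) (hv : 0 ≤ v) :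
    G (u, v) ≤ K := by
  have t1 : Tendsto (fun ε : ℝ => ((u + ε, v + ε) : ℝ × ℝ)) (𝓝[>] 0) (𝓝 (u, v)) := by
    have : Tendsto (fun ε : ℝ => ((u + ε, v + ε) : ℝ × ℝ)) (𝓝 0) (𝓝 (u + 0, v + 0)) := by
      apply Continuous.tendsto
      exact (continuous_const.add continuous_id).prodMk (continuous_const.add continuous_id)
    simpa using this.mono_left nhdsWithin_le_nhds
  have t2 : Tendsto (fun ε : ℝ => G (u + ε, v + ε)) (𝓝[>] 0) (𝓝 (G (u, v))) :=
    (hG.tendsto (u, v)).comp t1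
  refine le_of_tendsto t2 ?_
  filter_upwards [eventually_mem_nhdsWithin] with ε (hε : 0 < ε)
  exact h _ _ (by linarith) (by linarith)

end auxlim

/-- the Legendre transform `h(s̄,t̄) = sup_{(s,t)} (s s̄ + t t̄ - f(s,t))` is finite
(the supremand is bounded above) and equals
`(a^(1-p')/p') * (sup_{σ>0} (|s̄| + σ|t̄|)/(1 + 2bσ^(p/2) + σ^p)^(1/p))^(p')`. -/
theorem stmt_4 (p p' a b : ℝ) (hp : 2 < p) (hp' : p' = p / (p - 1)) (ha : 0 < a)
    (hb0 : 0 ≤ b) (hb1 : b ≤ p - 1) (sb tb : ℝ) :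
    BddAbove (Set.range fun st : ℝ × ℝ =>
      st.1 * sb + st.2 * tb -
        (a / p) * (|st.1| ^ p + 2 * b * |st.1| ^ (p / 2) * |st.2| ^ (p / 2) + |st.2| ^ p)) ∧
    (⨆ st : ℝ × ℝ,
      (st.1 * sb + st.2 * tb -
        (a / p) * (|st.1| ^ p + 2 * b * |st.1| ^ (p / 2) * |st.2| ^ (p / 2) + |st.2| ^ p))) =
      (a ^ (1 - p') / p') *
        (⨆ σ : Set.Ioi (0 : ℝ),
          (|sb| + (σ : ℝ) * |tb|) /
            (1 + 2 * b * (σ : ℝ) ^ (p / 2) + (σ : ℝ) ^ p) ^ (1 / p)) ^ p' := by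
  have hp1 : (1:ℝ) < p := by linarith
  have hp0 : (0:ℝ) < p := by linarith
  have hp2 : (0:ℝ) < p / 2 := by linarith
  have hpm : (0:ℝ) < p - 1 := by linarith
  have hq1 : 1 < p' := by rw [hp', lt_div_iff₀ hpm]; linarith
  have hq0 : (0:ℝ) < p' := by linarith
  haveI : Nonempty (Set.Ioi (0:ℝ)) := ⟨⟨1, by norm_num⟩⟩
  -- notation
  set val : ℝ × ℝ → ℝ := fun st =>
    st.1 * sb + st.2 * tb -
      (a / p) * (|st.1| ^ p + 2 * b * |st.1| ^ (p / 2) * |st.2| ^ (p / 2) + |st.2| ^ p)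
    with hval
  set φ : Set.Ioi (0:ℝ) → ℝ := fun σ =>
    (|sb| + (σ : ℝ) * |tb|) / (1 + 2 * b * (σ : ℝ) ^ (p / 2) + (σ : ℝ) ^ p) ^ (1 / p)
    with hφ
  -- basic facts about the denominator
  have hBpos : ∀ σ : ℝ, 0 < σ → 0 < 1 + 2 * b * σ ^ (p / 2) + σ ^ p := by
    intro σ hσ
    have h1 : 0 ≤ σ ^ (p / 2) := rpow_nonneg hσ.le _
    have h2 : 0 < σ ^ p := rpow_pos_of_pos hσ _
    nlinarith
  have hφnonneg : ∀ σ : Set.Ioi (0:ℝ), 0 ≤ φ σ := by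
    intro σ
    have := hBpos σ σ.2
    have : (0:ℝ) ≤ (1 + 2 * b * (σ:ℝ) ^ (p / 2) + (σ:ℝ) ^ p) ^ (1 / p) :=
      rpow_nonneg this.le _
    exact div_nonneg (add_nonneg (abs_nonneg _) (mul_nonneg (le_of_lt σ.2) (abs_nonneg _))) this
  have hφbdd : BddAbove (Set.range φ) := by
    refine ⟨|sb| + |tb|, ?_⟩
    rintro _ ⟨σ, rfl⟩
    obtain ⟨s, hs⟩ := σ
    have hs' : (0:ℝ) < s := hs
    have hB := hBpos s hs'
    have hBp : (0:ℝ) < (1 + 2 * b * s ^ (p / 2) + s ^ p) ^ (1 / p) := rpow_pos_of_pos hB _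
    have hone : (1:ℝ) ≤ 1 + 2 * b * s ^ (p / 2) + s ^ p := by
      have h1 : 0 ≤ s ^ (p / 2) := rpow_nonneg hs'.le _
      have h2 : 0 < s ^ p := rpow_pos_of_pos hs' _
      nlinarith
    have h1 : (1:ℝ) ≤ (1 + 2 * b * s ^ (p / 2) + s ^ p) ^ (1 / p) := by
      calc (1:ℝ) = 1 ^ (1/p) := (one_rpow _).symm
        _ ≤ (1 + 2 * b * s ^ (p / 2) + s ^ p) ^ (1 / p) :=
          rpow_le_rpow zero_le_one hone (by positivity)
    have h2 : s ≤ (1 + 2 * b * s ^ (p / 2) + s ^ p) ^ (1 / p) := by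
      have hsp : s ^ p ≤ 1 + 2 * b * s ^ (p / 2) + s ^ p := by
        have h1 : 0 ≤ s ^ (p / 2) := rpow_nonneg hs'.le _
        nlinarith
      calc s = (s ^ p) ^ (1 / p) := by
            rw [← Real.rpow_mul hs'.le, mul_one_div, div_self hp0.ne', rpow_one]
        _ ≤ (1 + 2 * b * s ^ (p / 2) + s ^ p) ^ (1 / p) :=
          rpow_le_rpow (rpow_nonneg hs'.le _) hsp (by positivity)
    rw [hφ]
    simp only
    rw [div_le_iff₀ hBp]
    have e1 : |sb| ≤ |sb| * ((1 + 2 * b * s ^ (p / 2) + s ^ p) ^ (1 / p)) :=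
      le_mul_of_one_le_right (abs_nonneg _) h1
    have e2 : s * |tb| ≤ |tb| * ((1 + 2 * b * s ^ (p / 2) + s ^ p) ^ (1 / p)) := by
      calc s * |tb| ≤ ((1 + 2 * b * s ^ (p / 2) + s ^ p) ^ (1 / p)) * |tb| :=
            mul_le_mul_of_nonneg_right h2 (abs_nonneg _)
        _ = |tb| * ((1 + 2 * b * s ^ (p / 2) + s ^ p) ^ (1 / p)) := by ring
    nlinarith
  set M := ⨆ σ : Set.Ioi (0:ℝ), φ σ with hM
  have hM0 : 0 ≤ M := le_trans (hφnonneg ⟨1, by norm_num⟩) (le_ciSup hφbdd _)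
  have hC0 : 0 ≤ a ^ (1 - p') / p' := by positivity
  set K := a ^ (1 - p') / p' * M ^ p' with hK
  -- upper bound
  have hcore : ∀ u v : ℝ, 0 < u → 0 < v →
      u * |sb| + v * |tb| -
        (a / p) * (u ^ p + 2 * b * u ^ (p / 2) * v ^ (p / 2) + v ^ p) ≤ K := by
    intro u v hu hv
    set σ : ℝ := v / u with hσdef
    have hσ : 0 < σ := div_pos hv hu
    have hB := hBpos σ hσ
    have hvu : v = u * σ := by rw [hσdef]; field_simp
    have key1 : u * |sb| + v * |tb| = u * (|sb| + σ * |tb|) := by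
      rw [hvu]; ring
    have e1 : v ^ p = u ^ p * σ ^ p := by rw [hvu, mul_rpow hu.le hσ.le]
    have e2 : v ^ (p / 2) = u ^ (p / 2) * σ ^ (p / 2) := by
      rw [hvu, mul_rpow hu.le hσ.le]
    have e3 : u ^ p = u ^ (p / 2) * u ^ (p / 2) := by
      rw [← Real.rpow_add hu]; congr 1; ring
    have key2 : u ^ p + 2 * b * u ^ (p / 2) * v ^ (p / 2) + v ^ p
        = u ^ p * (1 + 2 * b * σ ^ (p / 2) + σ ^ p) := by
      rw [e1, e2, e3]; ring
    rw [key1, key2]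
    have hy := aux_young hp1 hp' ha (A := |sb| + σ * |tb|)
      (B := 1 + 2 * b * σ ^ (p / 2) + σ ^ p) (by positivity) hB hu.le
    refine le_trans hy ?_
    have hφσ : φ ⟨σ, hσ⟩ ≤ M := le_ciSup hφbdd _
    have hφσ0 : 0 ≤ φ ⟨σ, hσ⟩ := hφnonneg _
    have : (|sb| + σ * |tb|) / (1 + 2 * b * σ ^ (p / 2) + σ ^ p) ^ (1 / p) = φ ⟨σ, hσ⟩ := rfl
    rw [this]
    exact mul_le_mul_of_nonneg_left (rpow_le_rpow hφσ0 hφσ hq0.le) hC0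
  have hcont : Continuous (fun q : ℝ × ℝ =>
      q.1 * |sb| + q.2 * |tb| -
        (a / p) * (q.1 ^ p + 2 * b * q.1 ^ (p / 2) * q.2 ^ (p / 2) + q.2 ^ p)) := by
    have cp : Continuous fun x : ℝ => x ^ p := Real.continuous_rpow_const hp0.le
    have cp2 : Continuous fun x : ℝ => x ^ (p / 2) := Real.continuous_rpow_const hp2.le
    exact ((continuous_fst.mul continuous_const).add
      (continuous_snd.mul continuous_const)).sub
      (continuous_const.mul (((cp.comp continuous_fst).add
        ((continuous_const.mul (cp2.comp continuous_fst)).mul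
          (cp2.comp continuous_snd))).add (cp.comp continuous_snd)))
  have hF : ∀ u v : ℝ, 0 ≤ u → 0 ≤ v →
      u * |sb| + v * |tb| -
        (a / p) * (u ^ p + 2 * b * u ^ (p / 2) * v ^ (p / 2) + v ^ p) ≤ K := by
    intro u v hu hv
    exact aux_limit hcont hcore hu hv
  have hub : ∀ st : ℝ × ℝ, val st ≤ K := by
    intro st
    have h1 : st.1 * sb ≤ |st.1| * |sb| := by
      calc st.1 * sb ≤ |st.1 * sb| := le_abs_self _
        _ = |st.1| * |sb| := abs_mul _ _
    have h2 : st.2 * tb ≤ |st.2| * |tb| := by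
      calc st.2 * tb ≤ |st.2 * tb| := le_abs_self _
        _ = |st.2| * |tb| := abs_mul _ _
    have h3 := hF |st.1| |st.2| (abs_nonneg _) (abs_nonneg _)
    rw [hval]
    simp only
    linarith
  have hbdd : BddAbove (Set.range val) := ⟨K, by rintro _ ⟨st, rfl⟩; exact hub st⟩
  refine ⟨hbdd, ?_⟩
  -- now the equality
  have hupper : (⨆ st : ℝ × ℝ, val st) ≤ K := ciSup_le hub
  have hlower : K ≤ ⨆ st : ℝ × ℝ, val st := by
    -- K = ⨆ σ, C * (φ σ)^p', and each C * (φ σ)^p' is attained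
    have hstep : ∀ σ : Set.Ioi (0:ℝ),
        a ^ (1 - p') / p' * (φ σ) ^ p' ≤ ⨆ st : ℝ × ℝ, val st := by
      rintro ⟨s, hs⟩
      have hs' : (0:ℝ) < s := hs
      have hB := hBpos s hs'
      obtain ⟨r, hr0, hry⟩ := aux_young_eq hp1 hp' ha
        (A := |sb| + s * |tb|) (B := 1 + 2 * b * s ^ (p / 2) + s ^ p)
        (by positivity) hB
      set s0 : ℝ := if 0 ≤ sb then r else -r with hs0
      set t0 : ℝ := if 0 ≤ tb then s * r else -(s * r) with ht0
      have habs1 : |s0| = r := by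
        rw [hs0]; split_ifs <;> simp [abs_of_nonneg hr0, hr0]
      have habs2 : |t0| = s * r := by
        have : 0 ≤ s * r := mul_nonneg hs'.le hr0
        rw [ht0]; split_ifs <;> simp [abs_of_nonneg this, this]
      have hlin1 : s0 * sb = r * |sb| := by
        rw [hs0]; split_ifs with h
        · rw [abs_of_nonneg h]
        · rw [abs_of_neg (not_le.mp h)]; ring
      have hlin2 : t0 * tb = s * r * |tb| := by
        rw [ht0]; split_ifs with h
        · rw [abs_of_nonneg h]
        · rw [abs_of_neg (not_le.mp h)]; ring
      have e1 : (s * r) ^ p = r ^ p * s ^ p := by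
        rw [mul_comm s r, mul_rpow hr0 hs'.le]
      have e2 : (s * r) ^ (p / 2) = r ^ (p / 2) * s ^ (p / 2) := by
        rw [mul_comm s r, mul_rpow hr0 hs'.le]
      have e3 : r ^ p = r ^ (p / 2) * r ^ (p / 2) := by
        rw [← Real.rpow_add_of_nonneg hr0 hp2.le hp2.le]; congr 1; ring
      have hvaleq : val (s0, t0) = r * (|sb| + s * |tb|) -
          a / p * (r ^ p * (1 + 2 * b * s ^ (p / 2) + s ^ p)) := by
        rw [hval]
        simp only
        rw [habs1, habs2, hlin1, hlin2, e1, e2, e3]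
        ring
      have hle : a ^ (1 - p') / p' * (φ ⟨s, hs⟩) ^ p' ≤ val (s0, t0) := by
        rw [hvaleq]
        exact hry
      exact le_trans hle (le_ciSup hbdd (s0, t0))
    -- K = ⨆ σ, C * (max (φ σ) 0)^p'
    set f : ℝ → ℝ := fun x => a ^ (1 - p') / p' * (max x 0) ^ p' with hf
    have hfmono : Monotone f := by
      intro x y hxy
      apply mul_le_mul_of_nonneg_left _ hC0
      exact rpow_le_rpow (le_max_right x 0) (max_le_max hxy le_rfl) hq0.le
    have hfcont : ContinuousAt f M := by
      apply ContinuousAt.mul continuousAt_const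
      exact (Real.continuousAt_rpow_const _ _ (Or.inr hq0.le)).comp
        ((continuous_id.max continuous_const).continuousAt)
    have hmap : f M = ⨆ σ : Set.Ioi (0:ℝ), f (φ σ) := by
      rw [hM]
      exact Monotone.map_ciSup_of_continuousAt (by rw [← hM]; exact hfcont) hfmono hφbdd
    have hfM : f M = K := by rw [hf]; simp only; rw [max_eq_left hM0, hK]
    have hfφ : ∀ σ : Set.Ioi (0:ℝ), f (φ σ) = a ^ (1 - p') / p' * (φ σ) ^ p' := by
      intro σ
      rw [hf]; simp only; rw [max_eq_left (hφnonneg σ)]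
    rw [← hfM, hmap]
    apply ciSup_le
    intro σ
    rw [hfφ σ]
    exact hstep σ
  exact le_antisymm hupper hlower
end
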